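/- arXiv:1605.08830 — 7 statements merged into one kernel-verified Lean document; each statement's English description precedes it below -/
import Mathlib

section
/- Let W be the C(x)-subspace of C[[x]][x^{-1}] spanned by σ_1^m σ_2^r(f) for 0 ≤ m < m_1, 0 ≤ r < m_2, where f satisfies the two Mahler equations S_1(f)=0 and S_2(f)=0 with b_{1,0}, b_{2,0} ≠ 0. Then W is invariant under both σ_1 and σ_2, and moreover σ_1 and σ_2 restrict to injective C(x)-semilinear maps on W. -/
open scoped RatFunc

open HahnSeries Function

/-- A map on Laurent series given by the Mahler coefficient formula is (the underlying
function of) a ring homomorphism, namely `embDomain` along multiplication by `p`. -/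
private theorem mahler_ringHom (p : ℕ) (hp : 0 < p)
    (σ : LaurentSeries ℂ → LaurentSeries ℂ)
    (hσ : ∀ (f : LaurentSeries ℂ) (k : ℤ),
      (σ f).coeff k = if (p : ℤ) ∣ k then f.coeff (k / (p : ℤ)) else 0) :
    ∃ R : LaurentSeries ℂ →+* LaurentSeries ℂ, ⇑R = σ := by
  have hp0 : (0 : ℤ) < (p : ℤ) := by exact_mod_cast hp
  have hp' : (p : ℤ) ≠ 0 := hp0.ne'
  set e : ℤ →+ ℤ :=
    { toFun := fun k => (p : ℤ) * k
      map_zero' := mul_zero _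
      map_add' := fun a b => mul_add _ _ _ } with he
  have hinj : Function.Injective e := fun a b h => by
    exact mul_left_cancel₀ hp' h
  have hmono : ∀ a b : ℤ, e a ≤ e b ↔ a ≤ b := by
    intro a b
    constructor
    · intro h; exact le_of_mul_le_mul_left h hp0
    · intro h; exact mul_le_mul_of_nonneg_left h hp0.le
  refine ⟨HahnSeries.embDomainRingHom e hinj hmono, ?_⟩
  funext g
  ext k
  rw [hσ]
  split_ifs with h
  · obtain ⟨c, rfl⟩ := h
    rw [Int.mul_ediv_cancel_left _ hp']
    exact HahnSeries.embDomain_coeff (a := c)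
  · refine HahnSeries.embDomain_notin_range ?_
    rintro ⟨c, hc⟩
    exact h ⟨c, hc.symm⟩

/-- Coefficient formula for the composition of two Mahler operators. -/
private theorem mahler_comp_coeff (p q : ℕ) (hp : 0 < p) (hq : 0 < q)
    (σ₁ σ₂ : LaurentSeries ℂ → LaurentSeries ℂ)
    (hσ₁ : ∀ (f : LaurentSeries ℂ) (k : ℤ),
      (σ₁ f).coeff k = if (p : ℤ) ∣ k then f.coeff (k / (p : ℤ)) else 0)
    (hσ₂ : ∀ (f : LaurentSeries ℂ) (k : ℤ),
      (σ₂ f).coeff k = if (q : ℤ) ∣ k then f.coeff (k / (q : ℤ)) else 0)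
    (g : LaurentSeries ℂ) (k : ℤ) :
    (σ₁ (σ₂ g)).coeff k =
      if ((p : ℤ) * q) ∣ k then g.coeff (k / ((p : ℤ) * q)) else 0 := by
  have hp' : (p : ℤ) ≠ 0 := by exact_mod_cast hp.ne'
  have hq' : (q : ℤ) ≠ 0 := by exact_mod_cast hq.ne'
  by_cases h : ((p : ℤ) * q) ∣ k
  · obtain ⟨c, rfl⟩ := h
    rw [if_pos ⟨c, rfl⟩, Int.mul_ediv_cancel_left _ (mul_ne_zero hp' hq'), hσ₁,
      if_pos ⟨(q : ℤ) * c, by ring⟩]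
    have h1 : (p : ℤ) * q * c / p = (q : ℤ) * c := by
      rw [mul_assoc, Int.mul_ediv_cancel_left _ hp']
    rw [h1, hσ₂, if_pos ⟨c, rfl⟩, Int.mul_ediv_cancel_left _ hq']
  · rw [if_neg h, hσ₁]
    split_ifs with h1
    · obtain ⟨a, rfl⟩ := h1
      rw [Int.mul_ediv_cancel_left _ hp', hσ₂, if_neg]
      rintro ⟨c, rfl⟩
      exact h ⟨c, by ring⟩
    · rfl

/-- Let `f` satisfy the two Mahler equations `S₁(f) = 0`, `S₂(f) = 0` with
`b_{1,0}, b_{2,0} ≠ 0`, and let `W` be the `ℂ(x)`-subspace of `ℂ[[x]][x⁻¹]` spanned by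
`σ₁^m σ₂^r f` for `0 ≤ m < m₁`, `0 ≤ r < m₂`.  Then `W` is invariant under `σ₁` and `σ₂`,
and `σ₁, σ₂` restrict to injective `ℂ(x)`-semilinear maps on `W` (semilinear with respect
to the endomorphisms `τ₁, τ₂` of `ℂ(x)` induced by `σ₁, σ₂`). -/
theorem stmt3 (p q : ℕ) (hp : 0 < p) (hq : 0 < q)
    (σ₁ σ₂ : LaurentSeries ℂ → LaurentSeries ℂ)
    (hσ₁ : ∀ (f : LaurentSeries ℂ) (k : ℤ),
      (σ₁ f).coeff k = if (p : ℤ) ∣ k then f.coeff (k / (p : ℤ)) else 0)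
    (hσ₂ : ∀ (f : LaurentSeries ℂ) (k : ℤ),
      (σ₂ f).coeff k = if (q : ℤ) ∣ k then f.coeff (k / (q : ℤ)) else 0)
    (τ₁ τ₂ : RatFunc ℂ →+* RatFunc ℂ)
    (hτ₁ : ∀ r : RatFunc ℂ, ((τ₁ r : RatFunc ℂ) : LaurentSeries ℂ) = σ₁ (r : LaurentSeries ℂ))
    (hτ₂ : ∀ r : RatFunc ℂ, ((τ₂ r : RatFunc ℂ) : LaurentSeries ℂ) = σ₂ (r : LaurentSeries ℂ))
    (m₁ m₂ : ℕ) (hm₁ : 0 < m₁) (hm₂ : 0 < m₂)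
    (b₁ : ℕ → RatFunc ℂ) (b₂ : ℕ → RatFunc ℂ)
    (hb₁ : b₁ 0 ≠ 0) (hb₂ : b₂ 0 ≠ 0)
    (f : LaurentSeries ℂ)
    (heq₁ : σ₁^[m₁] f + ∑ i ∈ Finset.range m₁, (b₁ i : LaurentSeries ℂ) * σ₁^[i] f = 0)
    (heq₂ : σ₂^[m₂] f + ∑ i ∈ Finset.range m₂, (b₂ i : LaurentSeries ℂ) * σ₂^[i] f = 0)
    (W : Submodule (RatFunc ℂ) (LaurentSeries ℂ))
    (hW : W = Submodule.span (RatFunc ℂ)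
      {w | ∃ m r : ℕ, m < m₁ ∧ r < m₂ ∧ w = σ₁^[m] (σ₂^[r] f)}) :
    (∀ w ∈ W, σ₁ w ∈ W) ∧ (∀ w ∈ W, σ₂ w ∈ W) ∧
    (∀ (c : RatFunc ℂ) (w : LaurentSeries ℂ), w ∈ W →
        σ₁ ((c : LaurentSeries ℂ) * w) = (τ₁ c : LaurentSeries ℂ) * σ₁ w) ∧
    (∀ (c : RatFunc ℂ) (w : LaurentSeries ℂ), w ∈ W →
        σ₂ ((c : LaurentSeries ℂ) * w) = (τ₂ c : LaurentSeries ℂ) * σ₂ w) ∧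
    (∀ w ∈ W, ∀ w' ∈ W, σ₁ w = σ₁ w' → w = w') ∧
    (∀ w ∈ W, ∀ w' ∈ W, σ₂ w = σ₂ w' → w = w') := by
  have hp' : (p : ℤ) ≠ 0 := by exact_mod_cast hp.ne'
  have hq' : (q : ℤ) ≠ 0 := by exact_mod_cast hq.ne'
  obtain ⟨R₁, hR₁⟩ := mahler_ringHom p hp σ₁ hσ₁
  obtain ⟨R₂, hR₂⟩ := mahler_ringHom q hq σ₂ hσ₂
  subst hR₁ hR₂
  -- commutation of the two operators
  have hcomm : ∀ g, R₁ (R₂ g) = R₂ (R₁ g) := by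
    intro g
    ext k
    rw [mahler_comp_coeff p q hp hq _ _ hσ₁ hσ₂ g k,
      mahler_comp_coeff q p hq hp _ _ hσ₂ hσ₁ g k, mul_comm (q : ℤ) (p : ℤ)]
  -- scalar multiplication is multiplication by the coercion
  have hsmul : ∀ (c : RatFunc ℂ) (x : LaurentSeries ℂ),
      c • x = (c : LaurentSeries ℂ) * x := fun c x => by
    rw [Algebra.smul_def]
  -- iterated compatibility with the endomorphisms of ℂ(x)
  have hiter : ∀ (S : LaurentSeries ℂ →+* LaurentSeries ℂ) (τ : RatFunc ℂ →+* RatFunc ℂ),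
      (∀ c : RatFunc ℂ, ((τ c : RatFunc ℂ) : LaurentSeries ℂ) = S (c : LaurentSeries ℂ)) →
      ∀ (r : ℕ) (c : RatFunc ℂ),
        (((τ ^ r) c : RatFunc ℂ) : LaurentSeries ℂ) = (⇑S)^[r] (c : LaurentSeries ℂ) := by
    intro S τ hτ r
    induction r with
    | zero => intro c; simp
    | succ n ih =>
        intro c
        rw [Function.iterate_succ_apply', ← ih, pow_succ']
        exact hτ _
  -- the invariance statement, proved symmetrically for both operators
  have inv : ∀ (R S : LaurentSeries ℂ →+* LaurentSeries ℂ)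
      (τR τS : RatFunc ℂ →+* RatFunc ℂ),
      (∀ c : RatFunc ℂ, ((τR c : RatFunc ℂ) : LaurentSeries ℂ) = R (c : LaurentSeries ℂ)) →
      (∀ c : RatFunc ℂ, ((τS c : RatFunc ℂ) : LaurentSeries ℂ) = S (c : LaurentSeries ℂ)) →
      (∀ g, R (S g) = S (R g)) →
      ∀ (mR mS : ℕ) (b : ℕ → RatFunc ℂ),
      ((⇑R)^[mR] f + ∑ i ∈ Finset.range mR, (b i : LaurentSeries ℂ) * (⇑R)^[i] f = 0) →
      ∀ w ∈ Submodule.span (RatFunc ℂ)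
        {w | ∃ m r : ℕ, m < mR ∧ r < mS ∧ w = (⇑R)^[m] ((⇑S)^[r] f)},
        R w ∈ Submodule.span (RatFunc ℂ)
          {w | ∃ m r : ℕ, m < mR ∧ r < mS ∧ w = (⇑R)^[m] ((⇑S)^[r] f)} := by
    intro R S τR τS hτR hτS hc mR mS b heq w hw
    have hCom : Function.Commute ⇑R ⇑S := hc
    induction hw using Submodule.span_induction with
    | zero => simp
    | add x y hx hy ihx ihy => rw [map_add]; exact add_mem ihx ihy
    | smul c x hx ih =>
        rw [hsmul, map_mul, ← hτR, ← hsmul]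
        exact Submodule.smul_mem _ _ ih
    | mem x hx =>
        obtain ⟨m, r, hm, hr, rfl⟩ := hx
        have hstep : R ((⇑R)^[m] ((⇑S)^[r] f)) = (⇑R)^[m + 1] ((⇑S)^[r] f) :=
          (Function.iterate_succ_apply' _ _ _).symm
        rw [hstep]
        rcases lt_or_eq_of_le (Nat.succ_le_of_lt hm) with hlt | heqm
        · exact Submodule.subset_span ⟨m + 1, r, hlt, hr, rfl⟩
        · have heqm' : m + 1 = mR := heqm
          rw [heqm']
          have hswap : (⇑R)^[mR] ((⇑S)^[r] f) = (⇑S)^[r] ((⇑R)^[mR] f) :=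
            ((hCom.iterate_left mR).iterate_right r) f
          have hRf : (⇑R)^[mR] f =
              -∑ i ∈ Finset.range mR, (b i : LaurentSeries ℂ) * (⇑R)^[i] f :=
            eq_neg_of_add_eq_zero_left heq
          have hSpow : (⇑S)^[r] = ⇑(S ^ r) := (RingHom.coe_pow S r).symm
          rw [hswap, hRf, hSpow, map_neg, map_sum]
          refine neg_mem (Submodule.sum_mem _ fun i hi => ?_)
          rw [map_mul, ← hSpow, ← hiter S τS hτS r (b i), ← hsmul]
          refine Submodule.smul_mem _ _ (Submodule.subset_span ?_)
          exact ⟨i, r, Finset.mem_range.mp hi, hr,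
            by rw [((hCom.iterate_left i).iterate_right r) f]⟩
  -- the two generating sets agree
  have hset : {w | ∃ m r : ℕ, m < m₁ ∧ r < m₂ ∧ w = (⇑R₁)^[m] ((⇑R₂)^[r] f)} =
      {w | ∃ m r : ℕ, m < m₂ ∧ r < m₁ ∧ w = (⇑R₂)^[m] ((⇑R₁)^[r] f)} := by
    have hCom : Function.Commute ⇑R₁ ⇑R₂ := hcomm
    ext w
    constructor
    · rintro ⟨m, r, hm, hr, rfl⟩
      exact ⟨r, m, hr, hm, ((hCom.iterate_left m).iterate_right r) f⟩
    · rintro ⟨m, r, hm, hr, rfl⟩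
      exact ⟨r, m, hr, hm, (((hCom.iterate_left r).iterate_right m) f).symm⟩
  -- injectivity key: recover coefficients
  have key : ∀ (n : ℕ), (n : ℤ) ≠ 0 →
      ∀ (R : LaurentSeries ℂ →+* LaurentSeries ℂ),
      (∀ (g : LaurentSeries ℂ) (k : ℤ),
        (R g).coeff k = if (n : ℤ) ∣ k then g.coeff (k / (n : ℤ)) else 0) →
      ∀ (w : LaurentSeries ℂ) (k : ℤ), (R w).coeff ((n : ℤ) * k) = w.coeff k := by
    intro n hn R hR w k
    rw [hR, if_pos ⟨k, rfl⟩, Int.mul_ediv_cancel_left _ hn]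
  refine ⟨?_, ?_, ?_, ?_, ?_, ?_⟩
  · intro w hw
    rw [hW] at hw ⊢
    exact inv R₁ R₂ τ₁ τ₂ hτ₁ hτ₂ hcomm m₁ m₂ b₁ heq₁ w hw
  · intro w hw
    rw [hW, hset] at hw ⊢
    exact inv R₂ R₁ τ₂ τ₁ hτ₂ hτ₁ (fun g => (hcomm g).symm) m₂ m₁ b₂ heq₂ w hw
  · intro c w _; rw [map_mul, hτ₁]
  · intro c w _; rw [map_mul, hτ₂]
  · intro w _ w' _ h
    ext k
    rw [← key p hp' R₁ hσ₁ w k, ← key p hp' R₁ hσ₁ w' k, h]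
  · intro w _ w' _ h
    ext k
    rw [← key q hq' R₂ hσ₂ w k, ← key q hq' R₂ hσ₂ w' k, h]
end

section
/- Let p ≥ 2 be an integer, A(x) ∈ GL_n(C(x)), and suppose g(x) ∈ (C[[x]][x^{-1}])^n is a formal Laurent series vector satisfying g(x^p) = A(x) g(x). Then g(x) converges in some punctured neighborhood of 0. -/
open Finset

set_option maxHeartbeats 1000000

noncomputable section AuxStmt5

/-- Coefficients vanish below `N` and are bounded by `M * R^(l-N)`. -/
def GeoBdd (f : LaurentSeries ℂ) : Prop :=
  ∃ (N : ℤ) (M R : ℝ), 1 ≤ M ∧ 1 ≤ R ∧ (∀ l : ℤ, l < N → f.coeff l = 0) ∧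
    (∀ l : ℤ, ‖f.coeff l‖ ≤ M * R ^ (l - N).toNat)

theorem key_bound (u v : LaurentSeries ℂ) (k N1 N2 : ℤ) (M1 M2 R : ℝ)
    (hR : 1 ≤ R) (hM1 : 0 ≤ M1) (hM2 : 0 ≤ M2)
    (hu : ∀ l ∈ u.support, N1 ≤ l ∧ ‖u.coeff l‖ ≤ M1 * R ^ (l - N1).toNat)
    (hv : ∀ m ∈ v.support, m + N1 ≤ k → N2 ≤ m ∧ ‖v.coeff m‖ ≤ M2 * R ^ (m - N2).toNat) :
    ‖(u * v).coeff k‖ ≤ M1 * M2 * ((k - N1 - N2).toNat + 1) * R ^ (k - N1 - N2).toNat := by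
  rw [HahnSeries.coeff_mul]
  set T := Finset.antidiagonal u.isPWO_support v.isPWO_support k with hT
  have hterm : ∀ ij ∈ T, ‖u.coeff ij.1 * v.coeff ij.2‖ ≤ M1 * M2 * R ^ (k - N1 - N2).toNat := by
    rintro ⟨i, j⟩ hij
    rw [Finset.mem_antidiagonal] at hij
    obtain ⟨hi, hj, hsum⟩ := hij
    obtain ⟨hN1, hbu⟩ := hu i hi
    have hjk : j + N1 ≤ k := by omega
    obtain ⟨hN2, hbv⟩ := hv j hj hjk
    have hexp : (i - N1).toNat + (j - N2).toNat = (k - N1 - N2).toNat := by omega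
    calc ‖u.coeff i * v.coeff j‖ = ‖u.coeff i‖ * ‖v.coeff j‖ := norm_mul _ _
      _ ≤ (M1 * R ^ (i - N1).toNat) * (M2 * R ^ (j - N2).toNat) := by
          apply mul_le_mul hbu hbv (norm_nonneg _)
          positivity
      _ = M1 * M2 * R ^ ((i - N1).toNat + (j - N2).toNat) := by ring
      _ = M1 * M2 * R ^ (k - N1 - N2).toNat := by rw [hexp]
  have hcard : (T.card : ℝ) ≤ ((k - N1 - N2).toNat + 1 : ℝ) := by
    have : T.card ≤ (Finset.Icc N1 (k - N2)).card := by
      apply Finset.card_le_card_of_injOn Prod.fst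
      · rintro ⟨i, j⟩ hij
        rw [hT, Finset.mem_coe, Finset.mem_antidiagonal] at hij
        obtain ⟨hi, hj, hsum⟩ := hij
        have h1 := (hu i hi).1
        have h2 := (hv j hj (by omega)).1
        simp only [Finset.mem_coe, Finset.mem_Icc]
        omega
      · rintro ⟨i, j⟩ hij ⟨i', j'⟩ hij' h
        rw [Finset.mem_coe, hT, Finset.mem_antidiagonal] at hij hij'
        simp only [Prod.mk.injEq] at *
        omega
    have h2 : (Finset.Icc N1 (k - N2)).card = (k - N2 + 1 - N1).toNat := Int.card_Icc _ _
    have h3 : (k - N2 + 1 - N1).toNat ≤ (k - N1 - N2).toNat + 1 := by omega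
    have := this.trans (h2 ▸ h3)
    exact_mod_cast this
  calc ‖∑ ij ∈ T, u.coeff ij.1 * v.coeff ij.2‖ ≤ ∑ ij ∈ T, ‖u.coeff ij.1 * v.coeff ij.2‖ :=
        norm_sum_le _ _
    _ ≤ ∑ _ij ∈ T, M1 * M2 * R ^ (k - N1 - N2).toNat := Finset.sum_le_sum hterm
    _ = T.card * (M1 * M2 * R ^ (k - N1 - N2).toNat) := by rw [Finset.sum_const, nsmul_eq_mul]
    _ ≤ ((k - N1 - N2).toNat + 1) * (M1 * M2 * R ^ (k - N1 - N2).toNat) := by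
        apply mul_le_mul_of_nonneg_right hcard
        positivity
    _ = M1 * M2 * ((k - N1 - N2).toNat + 1) * R ^ (k - N1 - N2).toNat := by ring

theorem geoBdd_mul {u v : LaurentSeries ℂ} (hu : GeoBdd u) (hv : GeoBdd v) : GeoBdd (u * v) := by
  obtain ⟨N1, M1, R1, hM1, hR1, hu0, hu1⟩ := hu
  obtain ⟨N2, M2, R2, hM2, hR2, hv0, hv1⟩ := hv
  refine ⟨N1 + N2, M1 * M2, 2 * max R1 R2, one_le_mul_of_one_le_of_one_le hM1 hM2, by
    have := le_max_left R1 R2; nlinarith, ?_, ?_⟩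
  · -- vanishing below N1 + N2
    intro l hl
    rw [HahnSeries.coeff_mul]
    apply Finset.sum_eq_zero
    rintro ⟨i, j⟩ hij
    rw [Finset.mem_antidiagonal] at hij
    obtain ⟨hi, hj, hsum⟩ := hij
    exfalso
    have h1 : N1 ≤ i := by by_contra h; exact hi (hu0 i (by omega))
    have h2 : N2 ≤ j := by by_contra h; exact hj (hv0 j (by omega))
    omega
  · intro l
    set R := max R1 R2 with hRdef
    have hR : 1 ≤ R := le_trans hR1 (le_max_left _ _)
    have hb : ‖(u * v).coeff l‖ ≤ M1 * M2 * ((l - N1 - N2).toNat + 1) * R ^ (l - N1 - N2).toNat := by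
      apply key_bound u v l N1 N2 M1 M2 R hR (by linarith) (by linarith)
      · intro i hi
        have h1 : N1 ≤ i := by
          by_contra h
          exact hi (hu0 i (by omega))
        refine ⟨h1, (hu1 i).trans ?_⟩
        apply mul_le_mul_of_nonneg_left _ (by linarith)
        exact pow_le_pow_left₀ (by linarith) (le_max_left _ _) _
      · intro j hj _
        have h2 : N2 ≤ j := by
          by_contra h
          exact hj (hv0 j (by omega))
        refine ⟨h2, (hv1 j).trans ?_⟩
        apply mul_le_mul_of_nonneg_left _ (by linarith)
        exact pow_le_pow_left₀ (by linarith) (le_max_right _ _) _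
    refine hb.trans ?_
    have he : ((l - N1 - N2).toNat + 1 : ℝ) ≤ 2 ^ (l - N1 - N2).toNat := by
      exact_mod_cast Nat.lt_two_pow_self (n := (l - N1 - N2).toNat)
    have hee : (l - (N1 + N2)).toNat = (l - N1 - N2).toNat := by omega
    rw [hee, mul_pow]
    calc M1 * M2 * ((l - N1 - N2).toNat + 1) * R ^ (l - N1 - N2).toNat
        ≤ M1 * M2 * (2 ^ (l - N1 - N2).toNat) * R ^ (l - N1 - N2).toNat := by
          apply mul_le_mul_of_nonneg_right _ (by positivity)
          apply mul_le_mul_of_nonneg_left he (by positivity)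
      _ = M1 * M2 * (2 ^ (l - N1 - N2).toNat * R ^ (l - N1 - N2).toNat) := by ring

theorem geoBdd_of_ps (w : PowerSeries ℂ) (M R : ℝ) (hM : 1 ≤ M) (hR : 1 ≤ R)
    (h : ∀ m : ℕ, ‖PowerSeries.coeff m w‖ ≤ M * R ^ m) :
    GeoBdd ((w : LaurentSeries ℂ)) := by
  refine ⟨0, M, R, hM, hR, ?_, ?_⟩
  · intro l hl
    rw [PowerSeries.coeff_coe, if_pos (by omega)]
  · intro l
    rw [PowerSeries.coeff_coe]
    split_ifs with h'
    · simp only [norm_zero]; positivity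
    · have : l.natAbs = (l - 0).toNat := by omega
      rw [← this]; exact h _

theorem geoBdd_poly (q : Polynomial ℂ) : GeoBdd ((q : PowerSeries ℂ) : LaurentSeries ℂ) := by
  have h1 : (0:ℝ) ≤ ∑ i ∈ Finset.range (q.natDegree + 1), ‖q.coeff i‖ :=
    Finset.sum_nonneg fun i _ => norm_nonneg _
  apply geoBdd_of_ps _ (1 + ∑ i ∈ Finset.range (q.natDegree + 1), ‖q.coeff i‖) 1 (by linarith)
    le_rfl
  intro m
  rw [Polynomial.coeff_coe, one_pow, mul_one]
  rcases le_or_gt m q.natDegree with h | h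
  · have : ‖q.coeff m‖ ≤ ∑ i ∈ Finset.range (q.natDegree + 1), ‖q.coeff i‖ :=
      Finset.single_le_sum (f := fun i => ‖q.coeff i‖) (fun i _ => norm_nonneg _)
        (Finset.mem_range.mpr (by omega))
    linarith
  · rw [Polynomial.coeff_eq_zero_of_natDegree_lt h, norm_zero]
    positivity

theorem ps_inv_bound (q : Polynomial ℂ) (h0 : q.coeff 0 ≠ 0) :
    ∃ M R : ℝ, 1 ≤ M ∧ 1 ≤ R ∧
      ∀ m : ℕ, ‖PowerSeries.coeff m ((q : PowerSeries ℂ)⁻¹)‖ ≤ M * R ^ m := by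
  set c : ℝ := ‖(q.coeff 0)⁻¹‖ with hc
  set S : ℝ := ∑ i ∈ Finset.range (q.natDegree + 1), ‖q.coeff i‖ with hS
  have hS0 : 0 ≤ S := Finset.sum_nonneg fun i _ => norm_nonneg _
  have hc0 : 0 ≤ c := norm_nonneg _
  refine ⟨1 + c, 1 + c * S, by linarith, by nlinarith, ?_⟩
  set M : ℝ := 1 + c with hM
  set R : ℝ := 1 + c * S with hR
  have hM1 : 1 ≤ M := by linarith
  have hR1 : 1 ≤ R := by rw [hR]; nlinarith
  have hconst : PowerSeries.constantCoeff (q : PowerSeries ℂ) = q.coeff 0 :=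
    Polynomial.constantCoeff_coe q
  -- bound on all polynomial coefficients sums
  have hqsum : ∀ n : ℕ, ∑ i ∈ Finset.range (n + 1), ‖q.coeff i‖ ≤ S := by
    intro n
    rcases le_or_gt (n + 1) (q.natDegree + 1) with h | h
    · apply Finset.sum_le_sum_of_subset_of_nonneg (Finset.range_subset_range.mpr h)
      intro i _ _; exact norm_nonneg _
    · rw [hS]
      rw [← Finset.sum_subset (Finset.range_subset_range.mpr (by omega : q.natDegree + 1 ≤ n + 1))]
      intro i hi hni
      rw [Polynomial.coeff_eq_zero_of_natDegree_lt, norm_zero]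
      simp only [Finset.mem_range] at hi hni
      omega
  intro m
  induction m using Nat.strong_induction_on with
  | _ m ih =>
    rcases Nat.eq_zero_or_pos m with rfl | hm
    · rw [PowerSeries.coeff_inv, if_pos rfl, hconst, pow_zero, mul_one]
      rw [hM]; show c ≤ 1 + c; linarith
    · rw [PowerSeries.coeff_inv, if_neg (by omega), hconst]
      rw [norm_mul, norm_neg]
      have hbound : ∀ x ∈ Finset.HasAntidiagonal.antidiagonal m,
          ‖if x.2 < m then PowerSeries.coeff x.1 (q : PowerSeries ℂ) *
              PowerSeries.coeff x.2 ((q : PowerSeries ℂ)⁻¹) else 0‖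
            ≤ ‖q.coeff x.1‖ * (M * R ^ (m - 1)) := by
        rintro ⟨i, j⟩ hij
        rw [Finset.HasAntidiagonal.mem_antidiagonal] at hij
        split_ifs with hj
        · rw [norm_mul, Polynomial.coeff_coe]
          have hj' : ‖PowerSeries.coeff j ((q : PowerSeries ℂ)⁻¹)‖ ≤ M * R ^ (m - 1) := by
            refine (ih j hj).trans ?_
            apply mul_le_mul_of_nonneg_left _ (by linarith)
            exact pow_le_pow_right₀ hR1 (by omega)
          exact mul_le_mul_of_nonneg_left hj' (norm_nonneg _)
        · simp only [norm_zero]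
          exact mul_nonneg (norm_nonneg _)
            (mul_nonneg (by linarith) (pow_nonneg (by linarith) _))
      have hsum : ‖∑ x ∈ Finset.HasAntidiagonal.antidiagonal m,
          if x.2 < m then PowerSeries.coeff x.1 (q : PowerSeries ℂ) *
              PowerSeries.coeff x.2 ((q : PowerSeries ℂ)⁻¹) else 0‖
            ≤ S * (M * R ^ (m - 1)) := by
        apply (norm_sum_le _ _).trans
        apply (Finset.sum_le_sum hbound).trans
        rw [← Finset.sum_mul]
        apply mul_le_mul_of_nonneg_right _
          (mul_nonneg (by linarith) (pow_nonneg (by linarith) _))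
        rw [Finset.Nat.sum_antidiagonal_eq_sum_range_succ_mk]
        exact hqsum m
      have hfin : c * (S * (M * R ^ (m - 1))) ≤ M * R ^ m := by
        have hpow : R ^ m = R ^ (m - 1) * R := by
          rw [← pow_succ]; congr 1; omega
        rw [hpow]
        have hRp : (0:ℝ) < R ^ (m - 1) := pow_pos (by linarith) _
        have hcs : c * S ≤ R := by rw [hR]; linarith
        calc c * (S * (M * R ^ (m - 1))) = (c * S) * (M * R ^ (m - 1)) := by ring
          _ ≤ R * (M * R ^ (m - 1)) := by
              apply mul_le_mul_of_nonneg_right hcs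
              exact mul_nonneg (by linarith) (le_of_lt hRp)
          _ = M * (R ^ (m - 1) * R) := by ring
      exact le_trans (mul_le_mul_of_nonneg_left hsum hc0) hfin

theorem geoBdd_single (b : ℤ) (r : ℂ) : GeoBdd (HahnSeries.single b r) := by
  refine ⟨b, 1 + ‖r‖, 1, by linarith [norm_nonneg r], le_rfl, ?_, ?_⟩
  · intro l hl
    rw [HahnSeries.coeff_single, if_neg (by omega)]
  · intro l
    rw [HahnSeries.coeff_single, one_pow, mul_one]
    split_ifs with h
    · linarith
    · simp only [norm_zero]; positivity

theorem geoBdd_inv_poly (q : Polynomial ℂ) (hq : q ≠ 0) :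
    GeoBdd (((q : PowerSeries ℂ) : LaurentSeries ℂ)⁻¹) := by
  obtain ⟨q1, h1, h2⟩ := q.exists_eq_pow_rootMultiplicity_mul_and_not_dvd hq 0
  simp only [Polynomial.C_0, sub_zero] at h1 h2
  rw [Polynomial.X_dvd_iff] at h2
  set a := q.rootMultiplicity 0 with ha
  have hconst : PowerSeries.constantCoeff (q1 : PowerSeries ℂ) ≠ 0 := by
    rwa [Polynomial.constantCoeff_coe]
  set W : LaurentSeries ℂ := (((q1 : PowerSeries ℂ)⁻¹ : PowerSeries ℂ) : LaurentSeries ℂ) with hW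
  have hkey : ((q : PowerSeries ℂ) : LaurentSeries ℂ)⁻¹ = HahnSeries.single (-(a:ℤ)) 1 * W := by
    apply inv_eq_of_mul_eq_one_right
    have hq' : ((q : PowerSeries ℂ) : LaurentSeries ℂ)
        = HahnSeries.single (a:ℤ) 1 * ((q1 : PowerSeries ℂ) : LaurentSeries ℂ) := by
      rw [h1]
      push_cast
      rw [HahnSeries.ofPowerSeries_X, HahnSeries.single_pow]
      norm_num
    rw [hq', hW]
    have hmul : ((q1 : PowerSeries ℂ) : LaurentSeries ℂ) *
        (((q1 : PowerSeries ℂ)⁻¹ : PowerSeries ℂ) : LaurentSeries ℂ) = 1 := by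
      rw [← PowerSeries.coe_mul, PowerSeries.mul_inv_cancel _ hconst, PowerSeries.coe_one]
    calc HahnSeries.single (a:ℤ) 1 * ((q1 : PowerSeries ℂ) : LaurentSeries ℂ) *
          (HahnSeries.single (-(a:ℤ)) 1 * (((q1 : PowerSeries ℂ)⁻¹ : PowerSeries ℂ) : LaurentSeries ℂ))
        = (HahnSeries.single (a:ℤ) 1 * HahnSeries.single (-(a:ℤ)) 1) *
          (((q1 : PowerSeries ℂ) : LaurentSeries ℂ) *
            (((q1 : PowerSeries ℂ)⁻¹ : PowerSeries ℂ) : LaurentSeries ℂ)) := by ring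
      _ = 1 := by
          rw [hmul, HahnSeries.single_mul_single, add_neg_cancel, one_mul, mul_one,
            HahnSeries.single_zero_one]
  rw [hkey]
  apply geoBdd_mul (geoBdd_single _ _)
  obtain ⟨M, R, hM, hR, h⟩ := ps_inv_bound q1 h2
  exact geoBdd_of_ps _ M R hM hR h

theorem geoBdd_ratfunc (f : RatFunc ℂ) : GeoBdd (f : LaurentSeries ℂ) := by
  have hf : (f : LaurentSeries ℂ) = ((f.num : PowerSeries ℂ) : LaurentSeries ℂ) /
      ((f.denom : PowerSeries ℂ) : LaurentSeries ℂ) := by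
    rw [RatFunc.coe_coe, RatFunc.coe_coe, ← map_div₀]
    congr 1
    exact (RatFunc.num_div_denom f).symm
  rw [hf, div_eq_mul_inv]
  exact geoBdd_mul (geoBdd_poly f.num) (geoBdd_inv_poly f.denom f.denom_ne_zero)

end AuxStmt5

/-- If `g ∈ (ℂ[[x]][x⁻¹])ⁿ` is a formal Laurent series vector satisfying
`g(x^p) = A(x) g(x)` with `p ≥ 2` and `A ∈ GLₙ(ℂ(x))`, then `g` converges in a punctured
neighborhood of `0`: each component has coefficients bounded by `C rᵏ`, i.e. positive
radius of convergence. -/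
theorem stmt5 (p n : ℕ) (hp : 2 ≤ p)
    (σ : LaurentSeries ℂ → LaurentSeries ℂ)
    (hσ : ∀ (f : LaurentSeries ℂ) (k : ℤ),
      (σ f).coeff k = if (p : ℤ) ∣ k then f.coeff (k / (p : ℤ)) else 0)
    (A : Matrix (Fin n) (Fin n) (RatFunc ℂ)) (hA : IsUnit A.det)
    (g : Fin n → LaurentSeries ℂ)
    (hg : ∀ i, σ (g i) = ∑ j, (A i j : LaurentSeries ℂ) * g j) :
    ∃ C r : ℝ, 0 < C ∧ 0 < r ∧ ∀ i (k : ℕ), ‖(g i).coeff (k : ℤ)‖ ≤ C * r ^ k := by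
  classical
  set φ : RatFunc ℂ →+* LaurentSeries ℂ := (open RatFunc in algebraMap (RatFunc ℂ) (LaurentSeries ℂ)) with hφ
  set b : Matrix (Fin n) (Fin n) (LaurentSeries ℂ) := (A⁻¹).map φ with hb
  have hbc : ∀ i j, b i j = ((A⁻¹ i j : RatFunc ℂ) : LaurentSeries ℂ) := by
    intro i j
    rw [hb, Matrix.map_apply, hφ]
  -- the key identity g = B σ(g)
  have hid : ∀ j, g j = ∑ i, b j i * σ (g i) := by
    intro j
    have h1 : (A.map φ).mulVec (fun i => g i) = fun i => σ (g i) := by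
      funext i
      rw [hg i]
      simp only [Matrix.mulVec, dotProduct, Matrix.map_apply]
    have h2 : b * A.map φ = 1 := by
      rw [hb, ← Matrix.map_mul, Matrix.nonsing_inv_mul A hA, Matrix.map_one]
      · exact map_zero φ
      · exact map_one φ
    calc g j = ((1 : Matrix (Fin n) (Fin n) (LaurentSeries ℂ)).mulVec (fun i => g i)) j := by
          rw [Matrix.one_mulVec]
      _ = ((b * A.map φ).mulVec (fun i => g i)) j := by rw [h2]
      _ = (b.mulVec ((A.map φ).mulVec (fun i => g i))) j := by rw [Matrix.mulVec_mulVec]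
      _ = ∑ i, b j i * σ (g i) := by
          rw [h1]
          simp [Matrix.mulVec, dotProduct]
  have hco : ∀ j (k : ℤ), (g j).coeff k = ∑ i, (b j i * σ (g i)).coeff k := by
    intro j k
    rw [hid j]
    exact map_sum (HahnSeries.coeff.addMonoidHom k) _ _
  -- geometric data for the entries of b
  choose Nf Mf Rf hMf hRf hvan hbd using fun ij : Fin n × Fin n => geoBdd_ratfunc (A⁻¹ ij.1 ij.2)
  -- lower bounds for the supports of the g j
  have hgN : ∀ j : Fin n, ∃ Nj : ℤ, ∀ l : ℤ, l < Nj → (g j).coeff l = 0 := by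
    intro j
    by_cases h : g j = 0
    · exact ⟨0, fun l _ => by rw [h]; rfl⟩
    · exact ⟨(g j).order, fun l hl => HahnSeries.coeff_eq_zero_of_lt_order hl⟩
  choose Ng hNg using hgN
  -- uniform constants
  obtain ⟨N, hN⟩ : ∃ x : ℤ, x = -((∑ ij : Fin n × Fin n, (-(Nf ij)).toNat : ℕ) : ℤ)
      - ((∑ j : Fin n, (-(Ng j)).toNat : ℕ) : ℤ) := ⟨_, rfl⟩
  have hNf' : ∀ ij : Fin n × Fin n, N ≤ Nf ij := by
    intro ij
    have h1 : (-(Nf ij)).toNat ≤ ∑ ij' : Fin n × Fin n, (-(Nf ij')).toNat :=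
      Finset.single_le_sum (f := fun ij' => (-(Nf ij')).toNat) (fun _ _ => Nat.zero_le _)
        (Finset.mem_univ ij)
    have h2 : -(Nf ij) ≤ ((-(Nf ij)).toNat : ℤ) := Int.self_le_toNat _
    have h3 : (((-(Nf ij)).toNat : ℕ) : ℤ) ≤ ((∑ ij' : Fin n × Fin n, (-(Nf ij')).toNat : ℕ) : ℤ) := by
      exact_mod_cast h1
    have h4 : (0:ℤ) ≤ ((∑ j : Fin n, (-(Ng j)).toNat : ℕ) : ℤ) := Int.natCast_nonneg _
    rw [hN]; linarith
  have hNg' : ∀ j : Fin n, N ≤ Ng j := by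
    intro j
    have h1 : (-(Ng j)).toNat ≤ ∑ j' : Fin n, (-(Ng j')).toNat :=
      Finset.single_le_sum (f := fun j' => (-(Ng j')).toNat) (fun _ _ => Nat.zero_le _)
        (Finset.mem_univ j)
    have h2 : -(Ng j) ≤ ((-(Ng j)).toNat : ℤ) := Int.self_le_toNat _
    have h3 : (((-(Ng j)).toNat : ℕ) : ℤ) ≤ ((∑ j' : Fin n, (-(Ng j')).toNat : ℕ) : ℤ) := by
      exact_mod_cast h1
    have h4 : (0:ℤ) ≤ ((∑ ij : Fin n × Fin n, (-(Nf ij)).toNat : ℕ) : ℤ) := Int.natCast_nonneg _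
    rw [hN]; linarith
  have hN0 : N ≤ 0 := by
    rw [hN]
    have h4 : (0:ℤ) ≤ ((∑ ij : Fin n × Fin n, (-(Nf ij)).toNat : ℕ) : ℤ) := Int.natCast_nonneg _
    have h5 : (0:ℤ) ≤ ((∑ j : Fin n, (-(Ng j)).toNat : ℕ) : ℤ) := Int.natCast_nonneg _
    linarith
  obtain ⟨M, hM⟩ : ∃ x : ℝ, x = 1 + ∑ ij : Fin n × Fin n, Mf ij := ⟨_, rfl⟩
  obtain ⟨R, hR⟩ : ∃ x : ℝ, x = 4 + ∑ ij : Fin n × Fin n, Rf ij := ⟨_, rfl⟩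
  have hMf' : ∀ ij : Fin n × Fin n, Mf ij ≤ M := by
    intro ij
    have h1 : Mf ij ≤ ∑ ij' : Fin n × Fin n, Mf ij' :=
      Finset.single_le_sum (f := Mf) (fun ij' _ => le_trans zero_le_one (hMf ij'))
        (Finset.mem_univ ij)
    rw [hM]; linarith
  have hRf' : ∀ ij : Fin n × Fin n, Rf ij ≤ R := by
    intro ij
    have h1 : Rf ij ≤ ∑ ij' : Fin n × Fin n, Rf ij' :=
      Finset.single_le_sum (f := Rf) (fun ij' _ => le_trans zero_le_one (hRf ij'))
        (Finset.mem_univ ij)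
    rw [hR]; linarith
  have hM1 : 1 ≤ M := by
    rw [hM]
    have : (0:ℝ) ≤ ∑ ij : Fin n × Fin n, Mf ij :=
      Finset.sum_nonneg fun ij _ => le_trans zero_le_one (hMf ij)
    linarith
  have hR4 : 4 ≤ R := by
    rw [hR]
    have : (0:ℝ) ≤ ∑ ij : Fin n × Fin n, Rf ij :=
      Finset.sum_nonneg fun ij _ => le_trans zero_le_one (hRf ij)
    linarith
  have hR1 : 1 ≤ R := by linarith
  -- uniform bounds for entries of b
  have hbB : ∀ i j (l : ℤ), ‖(b i j).coeff l‖ ≤ M * R ^ (l - N).toNat := by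
    intro i j l
    rw [hbc]
    refine (hbd (i, j) l).trans ?_
    have he : (l - Nf (i, j)).toNat ≤ (l - N).toNat := by
      have := hNf' (i, j); omega
    calc Mf (i,j) * Rf (i,j) ^ (l - Nf (i,j)).toNat
        ≤ M * R ^ (l - Nf (i,j)).toNat := by
          apply mul_le_mul (hMf' (i,j)) _ (pow_nonneg (by linarith [hRf (i,j)]) _)
            (by linarith [hMf' (i,j), hMf (i,j)])
          exact pow_le_pow_left₀ (by linarith [hRf (i,j)]) (hRf' (i,j)) _
      _ ≤ M * R ^ (l - N).toNat := by
          apply mul_le_mul_of_nonneg_left _ (by linarith)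
          exact pow_le_pow_right₀ hR1 he
  have hbB0 : ∀ i j (l : ℤ), l < N → (b i j).coeff l = 0 := by
    intro i j l hl
    rw [hbc]
    exact hvan (i, j) l (by linarith [hNf' (i, j)])
  have hg0 : ∀ j (l : ℤ), l < N → (g j).coeff l = 0 := by
    intro j l hl
    exact hNg j l (by linarith [hNg' j])
  -- constants for the induction
  set PN : ℤ := (p : ℤ) * N with hPN
  have hPN0 : PN ≤ 0 := mul_nonpos_of_nonneg_of_nonpos (by positivity) hN0
  set a' : ℕ := (-PN).toNat with ha'
  have ha'' : (a' : ℤ) = -PN := Int.toNat_of_nonneg (by omega)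
  obtain ⟨K, hK⟩ : ∃ x : ℝ, x = (n : ℝ) * M * (a' + 1) * R ^ a' := ⟨_, rfl⟩
  obtain ⟨t1, ht1⟩ := pow_unbounded_of_one_lt K (one_lt_two (α := ℝ))
  set t0 : ℕ := max t1 (a' + 1) with ht0
  obtain ⟨C, hC⟩ : ∃ x : ℝ, x = 1 + ∑ j : Fin n, ∑ t ∈ Finset.range t0, ‖(g j).coeff (N + t)‖ := ⟨_, rfl⟩
  have hC1 : 1 ≤ C := by
    rw [hC]
    have : (0:ℝ) ≤ ∑ j : Fin n, ∑ t ∈ Finset.range t0, ‖(g j).coeff (N + t)‖ :=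
      Finset.sum_nonneg fun j _ => Finset.sum_nonneg fun t _ => norm_nonneg _
    linarith
  obtain ⟨r, hr⟩ : ∃ x : ℝ, x = R ^ p := ⟨_, rfl⟩
  have hr1 : 1 ≤ r := hr ▸ one_le_pow₀ hR1
  -- main induction
  have main : ∀ t : ℕ, ∀ j, ‖(g j).coeff (N + t)‖ ≤ C * r ^ t := by
    intro t
    induction t using Nat.strong_induction_on with
    | _ t ih =>
    intro j
    rcases lt_or_ge t t0 with hcase | hcase
    · -- base case
      have h1 : ‖(g j).coeff (N + t)‖ ≤ ∑ t' ∈ Finset.range t0, ‖(g j).coeff (N + t')‖ :=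
        Finset.single_le_sum (f := fun t' : ℕ => ‖(g j).coeff (N + (t' : ℤ))‖)
          (s := Finset.range t0) (fun _ _ => norm_nonneg _) (Finset.mem_range.mpr hcase)
      have h2 : ∑ t' ∈ Finset.range t0, ‖(g j).coeff (N + t')‖
          ≤ ∑ j' : Fin n, ∑ t' ∈ Finset.range t0, ‖(g j').coeff (N + t')‖ :=
        Finset.single_le_sum (f := fun j' => ∑ t' ∈ Finset.range t0, ‖(g j').coeff (N + t')‖)
          (fun _ _ => Finset.sum_nonneg fun _ _ => norm_nonneg _) (Finset.mem_univ j)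
      have h3 : ‖(g j).coeff (N + t)‖ ≤ C := by rw [hC]; linarith
      refine h3.trans ?_
      exact le_mul_of_one_le_right (by linarith) (one_le_pow₀ hr1)
    · -- inductive step
      rw [hco j (N + t)]
      have hkb : ∀ i : Fin n, ‖(b j i * σ (g i)).coeff (N + t)‖
          ≤ M * C * ((t + a' : ℕ) + 1) * R ^ (t + a' : ℕ) := by
        intro i
        have he : ((N + t) - N - PN).toNat = t + a' := by omega
        have hmain := key_bound (b j i) (σ (g i)) (N + t) N PN M C R hR1
          (by linarith) (by linarith) ?_ ?_
        · rw [he] at hmain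
          exact hmain
        · -- hu
          intro l hl
          constructor
          · by_contra h
            exact (HahnSeries.mem_support _ _).mp hl (hbB0 j i l (by omega))
          · exact hbB j i l
        · -- hv
          intro m hm hmk
          have hmne : (σ (g i)).coeff m ≠ 0 := (HahnSeries.mem_support _ _).mp hm
          rw [hσ] at hmne
          have hdvd : (p : ℤ) ∣ m := by
            by_contra h
            rw [if_neg h] at hmne
            exact hmne rfl
          rw [if_pos hdvd] at hmne
          set m' : ℤ := m / (p : ℤ) with hm'
          have hmm : (p : ℤ) * m' = m := Int.mul_ediv_cancel' hdvd
          have hm'N : N ≤ m' := by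
            by_contra h
            exact hmne (hg0 i m' (by omega))
          constructor
          · rw [hPN, ← hmm]
            exact mul_le_mul_of_nonneg_left hm'N (by positivity)
          · set s : ℕ := (m' - N).toNat with hs
            have hm's : m' = N + s := by omega
            have hps : (p : ℤ) * s ≤ t + (a' : ℤ) := by
              have : (p:ℤ) * m' = (p:ℤ) * N + (p:ℤ) * s := by rw [hm's]; ring
              omega
            have h2s : 2 * (s : ℤ) ≤ (p : ℤ) * s := by
              have h2p : (2:ℤ) ≤ (p:ℤ) := by exact_mod_cast hp
              exact mul_le_mul_of_nonneg_right h2p (Int.natCast_nonneg _)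
            have hst : s < t := by
              have hta : (a' : ℤ) < t := by
                have : a' + 1 ≤ t0 := le_max_right _ _
                omega
              omega
            have hbd' := ih s hst i
            rw [← hm's] at hbd'
            have hexp : (m - PN).toNat = p * s := by
              have : m - PN = (p:ℤ) * s := by
                rw [← hmm, hPN, hm's]; ring
              omega
            rw [hexp, hσ, if_pos hdvd]
            show ‖(g i).coeff (m / (p:ℤ))‖ ≤ _
            rw [← hm']
            calc ‖(g i).coeff m'‖ ≤ C * r ^ s := hbd'
              _ = C * R ^ (p * s) := by rw [hr, ← pow_mul]
      have hsum : ‖∑ i, (b j i * σ (g i)).coeff (N + t)‖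
          ≤ (n : ℝ) * (M * C * (((t + a' : ℕ) : ℝ) + 1) * R ^ (t + a')) := by
        refine (norm_sum_le _ _).trans ?_
        refine (Finset.sum_le_sum fun i _ => hkb i).trans ?_
        rw [Finset.sum_const, Finset.card_univ, Fintype.card_fin, nsmul_eq_mul]
      refine hsum.trans ?_
      -- numeric chain
      have ht1t : (2:ℝ) ^ t1 ≤ 2 ^ t :=
        pow_le_pow_right₀ one_le_two (le_trans (le_max_left _ _) hcase)
      have hKt : K ≤ 2 ^ t := le_trans (le_of_lt ht1) ht1t
      have h2t : ((t:ℝ) + 1) ≤ 2 ^ t := by exact_mod_cast Nat.lt_two_pow_self (n := t)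
      have ha0 : (0:ℝ) ≤ (a' : ℝ) := Nat.cast_nonneg _
      have ht0' : (0:ℝ) ≤ (t : ℝ) := Nat.cast_nonneg _
      have hta : ((t + a' : ℕ) : ℝ) + 1 ≤ 2 ^ t * ((a':ℝ) + 1) := by
        push_cast
        nlinarith
      have hRt : (0:ℝ) < R ^ t := pow_pos (by linarith) _
      have hRa : (0:ℝ) < R ^ a' := pow_pos (by linarith) _
      have hC0 : (0:ℝ) < C := by linarith
      have hM0 : (0:ℝ) < M := by linarith
      have h2tp : (0:ℝ) < 2 ^ t := pow_pos zero_lt_two _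
      calc (n : ℝ) * (M * C * (((t + a' : ℕ) : ℝ) + 1) * R ^ (t + a'))
          = C * (((n:ℝ) * M * (((t + a' : ℕ) : ℝ) + 1)) * (R ^ t * R ^ a')) := by
            rw [pow_add]; ring
        _ ≤ C * (((n:ℝ) * M * (2 ^ t * ((a':ℝ) + 1))) * (R ^ t * R ^ a')) := by
            apply mul_le_mul_of_nonneg_left _ (le_of_lt hC0)
            apply mul_le_mul_of_nonneg_right _ (by positivity)
            apply mul_le_mul_of_nonneg_left hta (by positivity)
        _ = C * ((K * 2 ^ t) * R ^ t) := by rw [hK]; ring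
        _ ≤ C * ((2 ^ t * 2 ^ t) * R ^ t) := by
            apply mul_le_mul_of_nonneg_left _ (le_of_lt hC0)
            apply mul_le_mul_of_nonneg_right _ (le_of_lt hRt)
            exact mul_le_mul_of_nonneg_right hKt (le_of_lt h2tp)
        _ = C * ((4:ℝ) ^ t * R ^ t) := by
            rw [← mul_pow]; norm_num
        _ ≤ C * (R ^ t * R ^ t) := by
            apply mul_le_mul_of_nonneg_left _ (le_of_lt hC0)
            apply mul_le_mul_of_nonneg_right _ (le_of_lt hRt)
            exact pow_le_pow_left₀ (by norm_num) hR4 _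
        _ = C * R ^ (2 * t) := by rw [two_mul, pow_add]
        _ ≤ C * R ^ (p * t) := by
            apply mul_le_mul_of_nonneg_left _ (le_of_lt hC0)
            exact pow_le_pow_right₀ hR1 (Nat.mul_le_mul_right t hp)
        _ = C * r ^ t := by rw [hr, ← pow_mul]
  -- wrap up
  refine ⟨C * r ^ (-N).toNat, r, ?_, by linarith, ?_⟩
  · have : (0:ℝ) < r ^ (-N).toNat := pow_pos (by linarith) _
    nlinarith
  · intro i k
    have h := main (k + (-N).toNat) i
    have hidx : N + ((k + (-N).toNat : ℕ) : ℤ) = (k : ℤ) := by push_cast; omega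
    rw [hidx] at h
    refine h.trans (le_of_eq ?_)
    rw [pow_add]
    ring
end

section
/- Let p ≥ 2 be an integer, M ∈ Z with pM + s > M where s ∈ Z, let Ã(x) be a matrix of power series holomorphic and bounded on a disk D(0,R), and let r(x) be a convergent vector of Laurent series of valuation ≥ M. Then for sufficiently small ρ ∈ (0, min(R,1)), the equation ỹ(x) = x^s Ã(x) ỹ(x^p) − r(x) has a unique solution ỹ in the Banach space E_ρ of series F(x) = Σ_{m≥M} F_m x^m with norm |F|_ρ = Σ_{m≥M} |F_m| ρ^m < ∞. -/
open HahnSeries Finset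

namespace Stmt7Aux

lemma mul_coeff_eq_zero (f : PowerSeries ℂ) (w : LaurentSeries ℂ) {u v : ℤ}
    (hw : ∀ l : ℤ, l < u → w.coeff l = 0) (hv : v < u) :
    ((f : LaurentSeries ℂ) * w).coeff v = 0 := by
  rw [HahnSeries.coeff_mul]
  refine Finset.sum_eq_zero fun ij hij => ?_
  rw [Finset.mem_addAntidiagonal] at hij
  obtain ⟨h1, h2, h3⟩ := hij
  rw [HahnSeries.mem_support] at h1 h2
  have ha : 0 ≤ ij.1 := by
    by_contra hlt
    push_neg at hlt
    exact h1 (by rw [PowerSeries.coeff_coe, if_pos hlt])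
  have hb : u ≤ ij.2 := by
    by_contra hlt
    push_neg at hlt
    exact h2 (hw _ hlt)
  exfalso
  omega

lemma single_one_mul_coeff (g : LaurentSeries ℂ) (s k : ℤ) :
    (HahnSeries.single s (1 : ℂ) * g).coeff k = g.coeff (k - s) := by
  conv_lhs => rw [show k = k - s + s from by ring, HahnSeries.coeff_single_mul_add]
  rw [one_mul]

lemma sum_coeff {α : Type*} (t : Finset α) (F : α → LaurentSeries ℂ) (k : ℤ) :
    (∑ j ∈ t, F j).coeff k = ∑ j ∈ t, (F j).coeff k :=
  map_sum (HahnSeries.coeff.addMonoidHom k) F t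

noncomputable def phi (n : ℕ) (s : ℤ) (σ : LaurentSeries ℂ → LaurentSeries ℂ)
    (Atil : Matrix (Fin n) (Fin n) (PowerSeries ℂ)) (r : Fin n → LaurentSeries ℂ)
    (y : Fin n → LaurentSeries ℂ) : Fin n → LaurentSeries ℂ :=
  fun i => HahnSeries.single s (1 : ℂ) *
    (∑ j, ((Atil i j : PowerSeries ℂ) : LaurentSeries ℂ) * σ (y j)) - r i

lemma phi_coeff (n : ℕ) (s : ℤ) (σ : LaurentSeries ℂ → LaurentSeries ℂ)
    (Atil : Matrix (Fin n) (Fin n) (PowerSeries ℂ)) (r : Fin n → LaurentSeries ℂ)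
    (y : Fin n → LaurentSeries ℂ) (i : Fin n) (k : ℤ) :
    (phi n s σ Atil r y i).coeff k
      = (∑ j, (((Atil i j : PowerSeries ℂ) : LaurentSeries ℂ) * σ (y j)).coeff (k - s))
        - (r i).coeff k := by
  unfold phi
  rw [HahnSeries.coeff_sub, single_one_mul_coeff, sum_coeff]

lemma phi_supp (p n : ℕ) (hp : 2 ≤ p) (M s : ℤ) (hps : M < (p : ℤ) * M + s)
    (σ : LaurentSeries ℂ → LaurentSeries ℂ)
    (hσ : ∀ (f : LaurentSeries ℂ) (k : ℤ),
      (σ f).coeff k = if (p : ℤ) ∣ k then f.coeff (k / (p : ℤ)) else 0)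
    (Atil : Matrix (Fin n) (Fin n) (PowerSeries ℂ)) (r : Fin n → LaurentSeries ℂ)
    (hrM : ∀ i (k : ℤ), k < M → (r i).coeff k = 0)
    (y : Fin n → LaurentSeries ℂ)
    (hy : ∀ j (m : ℤ), m < M → (y j).coeff m = 0) :
    ∀ i (k : ℤ), k < M → (phi n s σ Atil r y i).coeff k = 0 := by
  intro i k hk
  have hp0 : (0:ℤ) < (p:ℤ) := by exact_mod_cast Nat.lt_of_lt_of_le (by norm_num) hp
  rw [phi_coeff, hrM i k hk, sub_zero]
  refine Finset.sum_eq_zero fun j _ => ?_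
  refine mul_coeff_eq_zero _ _ (u := (p:ℤ) * M) ?_ ?_
  · intro l hl
    rw [hσ]
    split
    · next hdvd =>
      obtain ⟨c, hc⟩ := hdvd
      subst hc
      rw [Int.mul_ediv_cancel_left _ hp0.ne']
      exact hy j c (lt_of_mul_lt_mul_left hl hp0.le)
    · rfl
  · linarith

lemma phi_agree (p n : ℕ) (hp : 2 ≤ p) (M s : ℤ) (hps : M < (p : ℤ) * M + s)
    (σ : LaurentSeries ℂ → LaurentSeries ℂ)
    (hσ : ∀ (f : LaurentSeries ℂ) (k : ℤ),
      (σ f).coeff k = if (p : ℤ) ∣ k then f.coeff (k / (p : ℤ)) else 0)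
    (Atil : Matrix (Fin n) (Fin n) (PowerSeries ℂ)) (r : Fin n → LaurentSeries ℂ)
    (y z : Fin n → LaurentSeries ℂ)
    (hy : ∀ j (m : ℤ), m < M → (y j).coeff m = 0)
    (hz : ∀ j (m : ℤ), m < M → (z j).coeff m = 0)
    (t : ℤ) (hyz : ∀ j (m : ℤ), m < t → (y j).coeff m = (z j).coeff m) :
    ∀ i (k : ℤ), k ≤ t → (phi n s σ Atil r y i).coeff k = (phi n s σ Atil r z i).coeff k := by
  intro i k hk
  have hp0 : (0:ℤ) < (p:ℤ) := by exact_mod_cast Nat.lt_of_lt_of_le (by norm_num) hp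
  rw [phi_coeff, phi_coeff]
  congr 1
  refine Finset.sum_congr rfl fun j _ => ?_
  have hzero : ((((Atil i j : PowerSeries ℂ) : LaurentSeries ℂ)) *
      (σ (y j) - σ (z j))).coeff (k - s) = 0 := by
    refine mul_coeff_eq_zero _ _ (u := (p:ℤ) * max t M) ?_ ?_
    · intro l hl
      rw [HahnSeries.coeff_sub, hσ, hσ]
      split
      · next hdvd =>
        obtain ⟨c, hc⟩ := hdvd
        subst hc
        rw [Int.mul_ediv_cancel_left _ hp0.ne'] at *
        have hc' : c < max t M := lt_of_mul_lt_mul_left hl hp0.le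
        rcases lt_or_ge c t with h | h
        · rw [hyz j c h, sub_self]
        · have hcM : c < M := by
            rcases lt_max_iff.mp hc' with h' | h'
            · omega
            · exact h'
          rw [hy j c hcM, hz j c hcM, sub_self]
      · simp
    · have hM : M ≤ max t M := le_max_right _ _
      have hk' : k ≤ max t M := le_trans hk (le_max_left _ _)
      nlinarith [mul_nonneg (by linarith : (0:ℤ) ≤ (p:ℤ) - 1)
        (by linarith : (0:ℤ) ≤ max t M - M)]
  rw [mul_sub, HahnSeries.coeff_sub] at hzero
  exact sub_eq_zero.mp hzero

end Stmt7Aux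

open HahnSeries Finset
namespace Stmt7AuxEst

lemma est (p : ℕ) (hp : 2 ≤ p) (M s : ℤ) (hps : M < (p:ℤ) * M + s)
    (σ : LaurentSeries ℂ → LaurentSeries ℂ)
    (hσ : ∀ (f : LaurentSeries ℂ) (k : ℤ),
      (σ f).coeff k = if (p:ℤ) ∣ k then f.coeff (k / (p:ℤ)) else 0)
    (R : ℝ) (hR : 0 < R) (C : ℝ) (hC : 0 ≤ C)
    (f : PowerSeries ℂ) (hf : ∀ a : ℕ, ‖(PowerSeries.coeff a) f‖ ≤ C / R ^ a)
    (q K : ℝ) (hq0 : 0 < q) (hq2 : q ≤ 1/2) (hqR : q ≤ R) (hK : 0 ≤ K)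
    (y : LaurentSeries ℂ) (k : ℤ)
    (hyM : ∀ m : ℤ, m < M → y.coeff m = 0)
    (hy : ∀ m : ℤ, m < k → ‖y.coeff m‖ ≤ K * q ^ (M - m)) :
    ‖((f : LaurentSeries ℂ) * σ y).coeff (k - s)‖ ≤ 2 * C * K * q ^ (M - k + 1) := by
  have hqne : q ≠ 0 := ne_of_gt hq0
  have hq1 : q ≤ 1 := by linarith
  have hp0 : (0:ℤ) < (p:ℤ) := by exact_mod_cast Nat.lt_of_lt_of_le (by norm_num) hp
  rw [HahnSeries.coeff_mul]
  set S := Finset.antidiagonal ((f : LaurentSeries ℂ)).isPWO_support (σ y).isPWO_support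
    (k - s) with hS
  have hstruct : ∀ ij ∈ S, 0 ≤ ij.1 ∧ (p:ℤ) * (ij.2 / (p:ℤ)) = ij.2 ∧ M ≤ ij.2 / (p:ℤ)
      ∧ ij.2 / (p:ℤ) < k ∧ ij.1 + ij.2 = k - s := by
    intro ij hij
    rw [hS, Finset.mem_addAntidiagonal] at hij
    obtain ⟨h1, h2, h3⟩ := hij
    rw [HahnSeries.mem_support] at h1 h2
    have ha : 0 ≤ ij.1 := by
      by_contra hlt; push_neg at hlt
      exact h1 (by rw [PowerSeries.coeff_coe, if_pos hlt])
    have hdvd : (p:ℤ) ∣ ij.2 := by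
      by_contra hnd
      exact h2 (by rw [hσ, if_neg hnd])
    have hcoeff : y.coeff (ij.2 / (p:ℤ)) ≠ 0 := by
      intro h0; exact h2 (by rw [hσ, if_pos hdvd, h0])
    have hMm : M ≤ ij.2 / (p:ℤ) := by
      by_contra hlt; push_neg at hlt; exact hcoeff (hyM _ hlt)
    have hpm : (p:ℤ) * (ij.2 / (p:ℤ)) = ij.2 := Int.mul_ediv_cancel' hdvd
    have hmk : ij.2 / (p:ℤ) < k := by
      set m := ij.2 / (p:ℤ) with hm
      nlinarith [mul_nonneg (by linarith : (0:ℤ) ≤ (p:ℤ) - 1)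
        (by linarith : (0:ℤ) ≤ m - M)]
    exact ⟨ha, hpm, hMm, hmk, h3⟩
  have hterm : ∀ ij ∈ S, ‖((f : LaurentSeries ℂ)).coeff ij.1 * (σ y).coeff ij.2‖
      ≤ (C * K * q ^ (M - k)) * q ^ (s + ((p:ℤ) - 1) * (ij.2 / (p:ℤ))) := by
    intro ij hij
    obtain ⟨ha, hpm, hMm, hmk, hsum⟩ := hstruct ij hij
    set m := ij.2 / (p:ℤ) with hm
    rw [norm_mul]
    have hA : ‖((f : LaurentSeries ℂ)).coeff ij.1‖ ≤ C * q ^ (-ij.1) := by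
      rw [PowerSeries.coeff_coe, if_neg (not_lt.mpr ha)]
      refine le_trans (hf ij.1.natAbs) ?_
      have hzq : (q:ℝ) ^ (-ij.1) = (q ^ ij.1.natAbs)⁻¹ := by
        rw [zpow_neg, ← Int.natAbs_of_nonneg ha, zpow_natCast]
        rw [Int.natAbs_of_nonneg ha]
      rw [hzq, ← div_eq_mul_inv]
      gcongr
    have hB : ‖(σ y).coeff ij.2‖ ≤ K * q ^ (M - m) := by
      rw [hσ, if_pos ⟨m, hpm.symm⟩]
      exact hy m hmk
    calc ‖((f : LaurentSeries ℂ)).coeff ij.1‖ * ‖(σ y).coeff ij.2‖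
        ≤ (C * q ^ (-ij.1)) * (K * q ^ (M - m)) :=
          mul_le_mul hA hB (norm_nonneg _) (by positivity)
      _ = (C * K * q ^ (M - k)) * q ^ (s + ((p:ℤ) - 1) * m) := by
          have hij1 : ij.1 = k - s - (p:ℤ) * m := by linarith
          rw [hij1]
          rw [mul_mul_mul_comm, ← zpow_add₀ hqne]
          rw [show -(k - s - (p:ℤ) * m) + (M - m) = (M - k) + (s + ((p:ℤ) - 1) * m) from by ring]
          rw [zpow_add₀ hqne, ← mul_assoc]
  refine le_trans (norm_sum_le _ _) ?_
  refine le_trans (Finset.sum_le_sum hterm) ?_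
  rw [← Finset.mul_sum]
  have key : ∑ ij ∈ S, q ^ (s + ((p:ℤ) - 1) * (ij.2 / (p:ℤ))) ≤ 2 * q := by
    set h : ℕ → ℝ := fun t => q ^ (s + ((p:ℤ) - 1) * M) * (q ^ (p - 1)) ^ t with hh
    have hgeo : (0:ℝ) ≤ q ^ (p-1) := by positivity
    have hgeoq : q ^ (p-1) ≤ q := by
      calc q ^ (p-1) ≤ q ^ 1 := pow_le_pow_of_le_one hq0.le hq1 (by omega)
        _ = q := pow_one q
    have hgeo1 : q ^ (p-1) < 1 := by linarith
    have hsumh : Summable h := (summable_geometric_of_lt_one hgeo hgeo1).mul_left _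
    have heq : ∀ ij ∈ S, q ^ (s + ((p:ℤ) - 1) * (ij.2 / (p:ℤ)))
        = h ((ij.2 / (p:ℤ) - M).toNat) := by
      intro ij hij
      obtain ⟨ha, hpm, hMm, hmk, hsum'⟩ := hstruct ij hij
      set m := ij.2 / (p:ℤ) with hm
      have htn : (((m - M).toNat : ℤ)) = m - M := Int.toNat_of_nonneg (by linarith)
      rw [hh]
      have e1 : s + ((p:ℤ) - 1) * m = (s + ((p:ℤ) - 1) * M)
          + ((p:ℤ) - 1) * (((m - M).toNat : ℤ)) := by rw [htn]; ring
      rw [e1, zpow_add₀ hqne]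
      congr 1
      have e2 : ((p:ℤ) - 1) * (((m - M).toNat : ℤ)) = (((p-1) * (m-M).toNat : ℕ) : ℤ) := by
        push_cast [Nat.cast_sub (by omega : 1 ≤ p)]
        ring
      rw [e2, zpow_natCast, pow_mul]
    rw [Finset.sum_congr rfl heq]
    have hinj : ∀ a ∈ S, ∀ b ∈ S,
        (fun ij : ℤ × ℤ => (ij.2 / (p:ℤ) - M).toNat) a
          = (fun ij : ℤ × ℤ => (ij.2 / (p:ℤ) - M).toNat) b → a = b := by
      intro a ha b hb hab
      obtain ⟨_, hpa, hMa, _, hsa⟩ := hstruct a ha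
      obtain ⟨_, hpb, hMb, _, hsb⟩ := hstruct b hb
      simp only at hab
      have hu : a.2 / (p:ℤ) - M = b.2 / (p:ℤ) - M := by
        have hcast := congrArg (fun t : ℕ => (t:ℤ)) hab
        rwa [Int.toNat_of_nonneg (by linarith), Int.toNat_of_nonneg (by linarith)] at hcast
      have h2 : a.2 = b.2 := by
        rw [← hpa, ← hpb]
        congr 1
        linarith
      have h1 : a.1 = b.1 := by omega
      exact Prod.ext h1 h2
    rw [← Finset.sum_image hinj]
    refine le_trans (hsumh.sum_le_tsum _ (fun t _ => by positivity)) ?_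
    rw [hh]
    rw [tsum_mul_left, tsum_geometric_of_lt_one hgeo hgeo1]
    have h1 : q ^ (s + ((p:ℤ) - 1) * M) ≤ q := by
      have he : (1:ℤ) ≤ s + ((p:ℤ) - 1) * M := by
        have : s + ((p:ℤ) - 1) * M = (p:ℤ) * M + s - M := by ring
        omega
      calc q ^ (s + ((p:ℤ) - 1) * M) ≤ q ^ (1:ℤ) :=
            zpow_le_zpow_right_of_le_one₀ hq0 hq1 he
        _ = q := zpow_one q
    have hhalf : q ^ (p-1) ≤ 1/2 := le_trans hgeoq hq2
    have hpos : (0:ℝ) < 1 - q ^ (p-1) := by linarith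
    have h2 : (1 - q ^ (p-1))⁻¹ ≤ 2 := by
      rw [inv_le_comm₀ hpos (by norm_num)]
      linarith
    calc q ^ (s + ((p:ℤ) - 1) * M) * (1 - q ^ (p-1))⁻¹ ≤ q * 2 :=
          mul_le_mul h1 h2 (inv_nonneg.mpr hpos.le) hq0.le
      _ = 2 * q := mul_comm _ _
  refine le_trans (mul_le_mul_of_nonneg_left key (by positivity)) ?_
  rw [zpow_add₀ hqne, zpow_one]
  exact le_of_eq (by ring)

end Stmt7AuxEst



/-- Fixed-point lemma.  Let `p ≥ 2`, `M, s ∈ ℤ` with `pM + s > M`, let `Ã(x)`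
be a matrix of power series holomorphic and bounded on `D(0,R)` (encoded by Cauchy-type
coefficient bounds `‖Ã_k‖ ≤ C/Rᵏ`), and let `r(x)` be a convergent vector of Laurent series
of valuation `≥ M`.  Then for all sufficiently small `ρ ∈ (0, min(R,1))` the equation
`ỹ(x) = x^s Ã(x) ỹ(x^p) − r(x)` has a unique solution `ỹ` in the Banach space `E_ρ` of
series `F = Σ_{m ≥ M} F_m x^m` with `Σ_{m ≥ M} ‖F_m‖ ρ^m < ∞`. -/
theorem stmt7 (p n : ℕ) (hp : 2 ≤ p) (M s : ℤ) (hps : M < (p : ℤ) * M + s)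
    (σ : LaurentSeries ℂ → LaurentSeries ℂ)
    (hσ : ∀ (f : LaurentSeries ℂ) (k : ℤ),
      (σ f).coeff k = if (p : ℤ) ∣ k then f.coeff (k / (p : ℤ)) else 0)
    (R : ℝ) (hR : 0 < R)
    (Atil : Matrix (Fin n) (Fin n) (PowerSeries ℂ))
    (hAtil : ∃ C : ℝ, ∀ i j (k : ℕ), ‖(PowerSeries.coeff k) (Atil i j)‖ ≤ C / R ^ k)
    (r : Fin n → LaurentSeries ℂ)
    (hrM : ∀ i (k : ℤ), k < M → (r i).coeff k = 0)
    (hrconv : ∃ Cr ρr : ℝ, 0 < ρr ∧ ∀ i (k : ℕ), ‖(r i).coeff (k : ℤ)‖ ≤ Cr * ρr ^ k) :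
    ∃ ρ₀ : ℝ, 0 < ρ₀ ∧ ρ₀ ≤ min R 1 ∧ ∀ ρ : ℝ, 0 < ρ → ρ < ρ₀ →
      ∃! y : Fin n → LaurentSeries ℂ,
        (∀ i (k : ℤ), k < M → (y i).coeff k = 0) ∧
        (∀ i, Summable (fun k : ℕ => ‖(y i).coeff (M + (k : ℤ))‖ * ρ ^ (M + (k : ℤ)))) ∧
        (∀ i, y i =
          HahnSeries.single s (1 : ℂ) *
            (∑ j, ((Atil i j : PowerSeries ℂ) : LaurentSeries ℂ) * σ (y j)) - r i) := by
  classical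
  obtain ⟨C₀, hC₀⟩ := hAtil
  obtain ⟨Cr₀, ρr, hρr, hCr₀⟩ := hrconv
  obtain ⟨C, hC, hfC⟩ : ∃ C : ℝ, 0 ≤ C ∧
      ∀ i j (a : ℕ), ‖(PowerSeries.coeff a) (Atil i j)‖ ≤ C / R ^ a := by
    refine ⟨max C₀ 0, le_max_right _ _, fun i j a => le_trans (hC₀ i j a) ?_⟩
    gcongr
    exact le_max_left _ _
  obtain ⟨Cr, hCr, hrc⟩ : ∃ Cr : ℝ, 0 ≤ Cr ∧
      ∀ i (a : ℕ), ‖(r i).coeff (a : ℤ)‖ ≤ Cr * ρr ^ a :=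
    ⟨max Cr₀ 0, le_max_right _ _, fun i a => le_trans (hCr₀ i a)
      (mul_le_mul_of_nonneg_right (le_max_left _ _) (pow_nonneg hρr.le a))⟩
  -- choose q
  obtain ⟨q, hq0, hq2, hqR, hqρr, hq4⟩ : ∃ q : ℝ, 0 < q ∧ q ≤ 1/2 ∧ q ≤ R ∧
      q * ρr ≤ 1 ∧ 4*n*C*q ≤ 1 := by
    refine ⟨min (min (1/2) R) (min (1/ρr) (1/(4*n*C+1))),
      lt_min (lt_min (by norm_num) hR) (lt_min (by positivity) (by positivity)),
      le_trans (min_le_left _ _) (min_le_left _ _),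
      le_trans (min_le_left _ _) (min_le_right _ _), ?_, ?_⟩
    · have h : min (min (1/2) R) (min (1/ρr) (1/(4*n*C+1))) ≤ 1/ρr :=
        le_trans (min_le_right _ _) (min_le_left _ _)
      calc min (min (1/2) R) (min (1/ρr) (1/(4*n*C+1))) * ρr ≤ (1/ρr) * ρr :=
            mul_le_mul_of_nonneg_right h hρr.le
        _ = 1 := by field_simp
    · have h : min (min (1/2) R) (min (1/ρr) (1/(4*n*C+1))) ≤ 1/(4*n*C+1) :=
        le_trans (min_le_right _ _) (min_le_right _ _)
      have hd : (0:ℝ) < 4*n*C+1 := by positivity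
      calc 4*n*C* min (min (1/2) R) (min (1/ρr) (1/(4*n*C+1)))
            ≤ (4*n*C) * (1/(4*n*C+1)) := mul_le_mul_of_nonneg_left h (by positivity)
        _ ≤ 1 := by rw [mul_one_div, div_le_one hd]; linarith
  have hq1 : q ≤ 1 := by linarith
  have hqne : q ≠ 0 := ne_of_gt hq0
  -- bound on r
  obtain ⟨D, hD, hrD⟩ : ∃ D : ℝ, 0 ≤ D ∧
      ∀ i (kk : ℤ), ‖(r i).coeff kk‖ ≤ D * q ^ (M - kk) := by
    set D₀ : ℝ := ∑ i : Fin n, ∑ kk ∈ Finset.Ico M 0, ‖(r i).coeff kk‖ with hD₀def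
    have hD₀nn : 0 ≤ D₀ := by positivity
    set D : ℝ := max (Cr * q ^ (-M)) D₀ with hDdef
    have hD : 0 ≤ D := le_trans hD₀nn (le_max_right _ _)
    refine ⟨D, hD, ?_⟩
    intro i kk
    rcases lt_or_ge kk M with h | h
    · rw [hrM i kk h, norm_zero]; positivity
    rcases lt_or_ge kk 0 with h0 | h0
    · have hterm : ‖(r i).coeff kk‖ ≤ D₀ := by
        rw [hD₀def]
        calc ‖(r i).coeff kk‖ ≤ ∑ kk' ∈ Finset.Ico M 0, ‖(r i).coeff kk'‖ :=
              Finset.single_le_sum (f := fun kk' => ‖(r i).coeff kk'‖)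
                (fun _ _ => norm_nonneg _) (Finset.mem_Ico.mpr ⟨h, h0⟩)
          _ ≤ ∑ i' : Fin n, ∑ kk' ∈ Finset.Ico M 0, ‖(r i').coeff kk'‖ :=
              Finset.single_le_sum
                (f := fun i' => ∑ kk' ∈ Finset.Ico M 0, ‖(r i').coeff kk'‖)
                (fun _ _ => by positivity) (Finset.mem_univ i)
      have h1 : (1:ℝ) ≤ q ^ (M - kk) := one_le_zpow_of_nonpos₀ hq0 hq1 (by omega)
      calc ‖(r i).coeff kk‖ ≤ D₀ := hterm
        _ ≤ D := le_max_right _ _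
        _ = D * 1 := (mul_one D).symm
        _ ≤ D * q ^ (M - kk) := mul_le_mul_of_nonneg_left h1 hD
    · have hkk : kk = (kk.toNat : ℤ) := (Int.toNat_of_nonneg h0).symm
      have hb := hrc i kk.toNat
      rw [← hkk] at hb
      refine le_trans hb ?_
      have e1 : (Cr * q ^ (-M)) * q ^ (M - kk) ≤ D * q ^ (M - kk) :=
        mul_le_mul_of_nonneg_right (le_max_left _ _) (by positivity)
      refine le_trans ?_ e1
      have e2 : (Cr * q ^ (-M)) * q ^ (M - kk) = Cr * q ^ (-kk) := by
        rw [mul_assoc, ← zpow_add₀ hqne, show -M + (M - kk) = -kk from by ring]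
      rw [e2]
      refine mul_le_mul_of_nonneg_left ?_ hCr
      have e3 : q ^ (-kk) = (q ^ kk.toNat)⁻¹ := by
        rw [zpow_neg]
        congr 1
        conv_lhs => rw [hkk]
        rw [zpow_natCast]
      rw [e3]
      have hq' : (0:ℝ) < q ^ kk.toNat := by positivity
      rw [inv_eq_one_div, le_div_iff₀ hq']
      rw [← mul_pow]
      exact pow_le_one₀ (by positivity) (by nlinarith)
  -- constants for the solution bound
  obtain ⟨K, hK, hKfin⟩ : ∃ K : ℝ, 0 ≤ K ∧ (n:ℝ) * (2*C*K*q) + D ≤ K := by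
    refine ⟨2*D, by positivity, ?_⟩
    nlinarith [mul_nonneg (by nlinarith : (0:ℝ) ≤ 1 - 4*n*C*q) hD]
  refine ⟨q, hq0, le_min hqR hq1, ?_⟩
  intro ρ hρ0 hρq
  -- the iteration
  set Φ : (Fin n → LaurentSeries ℂ) → (Fin n → LaurentSeries ℂ) :=
    Stmt7Aux.phi n s σ Atil r with hΦdef
  have iter_supp : ∀ (t : ℕ) j (m : ℤ), m < M → ((Φ^[t] 0) j).coeff m = 0 := by
    intro t
    induction t with
    | zero => intro j m _; simp
    | succ t ih =>
      intro j m hm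
      rw [Function.iterate_succ_apply']
      exact Stmt7Aux.phi_supp p n hp M s hps σ hσ Atil r hrM _ ih j m hm
  have stab : ∀ (t : ℕ) i (kk : ℤ), kk < M + t →
      ((Φ^[t] 0) i).coeff kk = ((Φ^[t+1] 0) i).coeff kk := by
    intro t
    induction t with
    | zero =>
      intro i kk hkk
      rw [iter_supp 0 i kk (by omega), iter_supp 1 i kk (by omega)]
    | succ t ih =>
      intro i kk hkk
      rw [show t + 1 + 1 = (t+1) + 1 from rfl]
      rw [Function.iterate_succ_apply' Φ t, Function.iterate_succ_apply' Φ (t+1)]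
      exact Stmt7Aux.phi_agree p n hp M s hps σ hσ Atil r _ _
        (iter_supp t) (iter_supp (t+1)) (M + t) (fun j m hm => ih j m hm) i kk (by omega)
  have stab' : ∀ (t t' : ℕ), t ≤ t' → ∀ i (kk : ℤ), kk < M + t →
      ((Φ^[t] 0) i).coeff kk = ((Φ^[t'] 0) i).coeff kk := by
    intro t t' htt'
    induction t' with
    | zero =>
      intro i kk h
      have : t = 0 := by omega
      subst this; rfl
    | succ t' ih =>
      intro i kk h
      rcases Nat.lt_or_ge t (t'+1) with hlt | hge
      · have ht' : t ≤ t' := by omega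
        rw [ih ht' i kk h]
        exact stab t' i kk (by omega)
      · have : t = t' + 1 := by omega
        subst this; rfl
  have hTgood : ∀ kk : ℤ, kk < M + ((kk - M + 1).toNat : ℤ) := by intro kk; omega
  -- the solution
  set Y : Fin n → LaurentSeries ℂ := fun i =>
    { coeff := fun kk => ((Φ^[(kk - M + 1).toNat] 0) i).coeff kk
      isPWO_support' := by
        have hsub : (Function.support fun kk : ℤ =>
            ((Φ^[(kk - M + 1).toNat] 0) i).coeff kk) ⊆ Set.Ici M := by
          intro kk hkk
          by_contra hnot
          rw [Set.mem_Ici, not_le] at hnot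
          exact hkk (iter_supp _ i kk hnot)
        exact Set.IsWF.isPWO (BddBelow.wellFoundedOn_lt (BddBelow.mono hsub bddBelow_Ici)) } with hYdef
  have Ycoeff : ∀ i (kk : ℤ),
      (Y i).coeff kk = ((Φ^[(kk - M + 1).toNat] 0) i).coeff kk := fun _ _ => rfl
  have Ysupp : ∀ i (kk : ℤ), kk < M → (Y i).coeff kk = 0 := by
    intro i kk h
    rw [Ycoeff]
    exact iter_supp _ i kk h
  have Ymatch : ∀ (t : ℕ) i (kk : ℤ), kk < M + t →
      (Y i).coeff kk = ((Φ^[t] 0) i).coeff kk := by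
    intro t i kk h
    rw [Ycoeff]
    rcases le_total ((kk - M + 1).toNat) t with h' | h'
    · exact stab' _ t h' i kk (hTgood kk)
    · exact (stab' t _ h' i kk h).symm
  have Yfix : ∀ i, Y i = Φ Y i := by
    intro i
    ext kk
    set T := (kk - M + 1).toNat with hT'
    have h1 : (Y i).coeff kk = ((Φ^[T+1] 0) i).coeff kk :=
      Ymatch (T+1) i kk (by have := hTgood kk; push_cast; push_cast at this; omega)
    have h2 : (Φ Y i).coeff kk = (Φ (Φ^[T] 0) i).coeff kk :=
      Stmt7Aux.phi_agree p n hp M s hps σ hσ Atil r Y _ Ysupp (iter_supp T) (M + T)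
        (fun j m hm => Ymatch T j m hm) i kk (le_of_lt (hTgood kk))
    have h3 : Φ (Φ^[T] 0) i = (Φ^[T+1] 0) i := by
      rw [Function.iterate_succ_apply']
    rw [h1, h2, h3]
  -- coefficient bound
  have Ybound : ∀ (ν : ℕ) (kk : ℤ), kk < M + ν → ∀ i,
      ‖(Y i).coeff kk‖ ≤ K * q ^ (M - kk) := by
    intro ν
    induction ν with
    | zero =>
      intro kk h i
      rw [Ysupp i kk (by omega), norm_zero]
      positivity
    | succ ν ih =>
      intro kk h i
      rcases lt_or_ge kk M with hkM | hkM
      · rw [Ysupp i kk hkM, norm_zero]; positivity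
      · rw [Yfix i, hΦdef, Stmt7Aux.phi_coeff]
        refine le_trans (norm_sub_le _ _) ?_
        have hA : ∀ j ∈ Finset.univ (α := Fin n),
            ‖((((Atil i j : PowerSeries ℂ) : LaurentSeries ℂ)) * σ (Y j)).coeff (kk - s)‖
              ≤ 2*C*K*q^(M - kk + 1) := by
          intro j _
          exact Stmt7AuxEst.est p hp M s hps σ hσ R hR C hC (Atil i j) (hfC i j)
            q K hq0 hq2 hqR hK (Y j) kk (Ysupp j) (fun m hm => ih m (by omega) j)
        refine le_trans (add_le_add
          (le_trans (norm_sum_le _ _) (Finset.sum_le_sum hA)) (hrD i kk)) ?_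
        rw [Finset.sum_const, Finset.card_univ, Fintype.card_fin, nsmul_eq_mul]
        rw [zpow_add₀ hqne (M-kk) 1, zpow_one]
        have hqpos : (0:ℝ) < q ^ (M - kk) := by positivity
        calc (n:ℝ) * (2*C*K*(q^(M-kk)*q)) + D * q^(M-kk)
            = ((n:ℝ)*(2*C*K*q) + D) * q^(M-kk) := by ring
          _ ≤ K * q^(M-kk) := mul_le_mul_of_nonneg_right hKfin hqpos.le
  have YboundAll : ∀ (kk : ℤ) i, ‖(Y i).coeff kk‖ ≤ K * q ^ (M - kk) :=
    fun kk i => Ybound (kk - M + 1).toNat kk (hTgood kk) i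
  -- assemble
  refine ⟨Y, ⟨Ysupp, ?_, ?_⟩, ?_⟩
  · -- summability
    intro i
    have hgr : (0:ℝ) ≤ ρ / q := by positivity
    have hgr1 : ρ / q < 1 := by rw [div_lt_one hq0]; exact hρq
    refine Summable.of_nonneg_of_le (fun t => by positivity) (fun t => ?_)
      ((summable_geometric_of_lt_one hgr hgr1).mul_left (K * ρ ^ (M:ℤ)))
    have h1 : ‖(Y i).coeff (M + t)‖ ≤ K * q ^ (M - (M + t)) := YboundAll _ i
    calc ‖(Y i).coeff (M + t)‖ * ρ ^ (M + (t:ℤ))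
        ≤ (K * q ^ (M - (M + (t:ℤ)))) * ρ ^ (M + (t:ℤ)) :=
          mul_le_mul_of_nonneg_right h1 (by positivity)
      _ = (K * ρ ^ (M:ℤ)) * (ρ / q) ^ t := by
          rw [show M - (M + (t:ℤ)) = -(t:ℤ) from by ring, zpow_neg, zpow_natCast,
            zpow_add₀ (ne_of_gt hρ0), zpow_natCast, div_pow]
          field_simp
  · -- fixed point
    intro i
    exact Yfix i
  · -- uniqueness
    rintro z ⟨hz1, _, hz3⟩
    have hzfix : ∀ i, z i = Φ z i := fun i => hz3 i
    have main : ∀ (ν : ℕ) i (kk : ℤ), kk < M + ν → (z i).coeff kk = (Y i).coeff kk := by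
      intro ν
      induction ν with
      | zero =>
        intro i kk h
        rw [hz1 i kk (by omega), Ysupp i kk (by omega)]
      | succ ν ih =>
        intro i kk h
        rw [hzfix i, Yfix i]
        exact Stmt7Aux.phi_agree p n hp M s hps σ hσ Atil r z Y hz1 Ysupp (M + ν)
          (fun j m hm => ih j m hm) i kk (by omega)
    funext i
    ext kk
    exact main (kk - M + 1).toNat i kk (hTgood kk)
end

section
/- Let p > 1, let B̃_1 ∈ GL_n(C), and suppose F is a holomorphic vector function on a sector S = {t : |t| > K, α < arg t < β} satisfying F(pt) = F(t) and F(qt) = B̃_1 F(t) on S, where exp(2πi log(q)/log(p)) is not a root of unity. Then F is a finite sum F(t) = Σ_{ℓ ∈ Λ} F_ℓ t^{2πiℓ/log(p)} over the finite set Λ of integers ℓ for which exp(2πi ℓ log(q)/log(p)) is an eigenvalue of B̃_1; in particular F extends analytically to the Riemann surface of log(t). -/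
open Complex MeasureTheory


-- injectivity of ℓ ↦ c^ℓ when c is not a root of unity
lemma zpow_inj_of_not_root {c : ℂ} (hc : c ≠ 0)
    (hroot : ¬ ∃ k : ℕ, 0 < k ∧ c ^ k = 1) :
    Function.Injective (fun ℓ : ℤ => c ^ ℓ) := by
  intro a b hab
  by_contra hne
  simp only at hab
  have hd : c ^ (a - b) = 1 := by
    rw [zpow_sub₀ hc, hab, div_self (zpow_ne_zero _ hc)]
  have hdn : a - b ≠ 0 := sub_ne_zero.mpr hne
  apply hroot
  refine ⟨(a - b).natAbs, Int.natAbs_pos.mpr hdn, ?_⟩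
  have := Int.natAbs_eq (a - b)
  rcases this with h | h
  · rw [← zpow_natCast, ← h, hd]
  · rw [← zpow_natCast, ← neg_neg ((a-b).natAbs : ℤ), ← h, zpow_neg, hd, inv_one]


lemma exp_affine_re_im (L : ℝ) (C : ℝ) (z : ℂ) :
    (((L:ℂ)/(2*Real.pi*Complex.I)) * z + ((C:ℝ):ℂ)).re = L/(2*Real.pi) * z.im + C ∧
    (((L:ℂ)/(2*Real.pi*Complex.I)) * z + ((C:ℝ):ℂ)).im = -(L/(2*Real.pi)) * z.re := by
  obtain ⟨a, ha⟩ : ∃ a : ℝ, a = L/(2*Real.pi) := ⟨_, rfl⟩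
  have h : (L:ℂ)/(2*Real.pi*Complex.I) = ((a : ℝ):ℂ) * (-Complex.I) := by
    have hπ : ((Real.pi:ℂ)) ≠ 0 := by exact_mod_cast Real.pi_ne_zero
    have hI : Complex.I ≠ 0 := Complex.I_ne_zero
    rw [ha]
    push_cast
    field_simp
    rw [sq, Complex.I_mul_I]
    ring
  rw [h, ← ha]
  constructor <;>
    simp [Complex.add_re, Complex.add_im, Complex.mul_re, Complex.mul_im] <;> ring


section helpers

-- S is open when 0 ∉ S
lemma sector_isOpen {K α β : ℝ} (hα : -Real.pi < α) (hβ : β ≤ Real.pi)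
    (h0 : ¬ (K < 0 ∧ α < 0 ∧ 0 < β)) :
    IsOpen {t : ℂ | K < ‖t‖ ∧ α < Complex.arg t ∧ Complex.arg t < β} := by
  rw [isOpen_iff_mem_nhds]
  intro t ht
  obtain ⟨ht1, ht2, ht3⟩ := ht
  have ht0 : t ≠ 0 := by
    intro h
    apply h0
    rw [h] at ht1 ht2 ht3
    simp only [norm_zero, Complex.arg_zero] at ht1 ht2 ht3
    exact ⟨ht1, ht2, ht3⟩
  have hslit : t ∈ Complex.slitPlane := by
    by_contra hns
    rw [Complex.mem_slitPlane_iff] at hns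
    push_neg at hns
    rcases lt_or_eq_of_le hns.1 with h | h
    · have : Complex.arg t = Real.pi := Complex.arg_eq_pi_iff.mpr ⟨h, hns.2⟩
      rw [this] at ht3
      linarith
    · exact ht0 (Complex.ext (by simp [← h]) (by simp [hns.2]))
  have harg : ContinuousAt Complex.arg t := Complex.continuousAt_arg hslit
  have h1 : {s : ℂ | K < ‖s‖} ∈ nhds t :=
    (continuous_norm.continuousAt (x := t)).preimage_mem_nhds (isOpen_Ioi.mem_nhds ht1)
  have h2 : {s : ℂ | α < Complex.arg s ∧ Complex.arg s < β} ∈ nhds t :=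
    harg.preimage_mem_nhds (isOpen_Ioo.mem_nhds ⟨ht2, ht3⟩)
  filter_upwards [h1, h2] with s hs1 hs2
  exact ⟨hs1, hs2⟩

lemma scale_mem_sector {K α β : ℝ} {t : ℂ} {x : ℝ} (hx : 1 ≤ x)
    (ht : K < ‖t‖ ∧ α < Complex.arg t ∧ Complex.arg t < β) :
    K < ‖(x:ℂ)*t‖ ∧ α < Complex.arg ((x:ℂ)*t) ∧ Complex.arg ((x:ℂ)*t) < β := by
  have hx0 : 0 < x := lt_of_lt_of_le one_pos hx
  constructor
  · rw [norm_mul]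
    have : ‖(x:ℂ)‖ = x := by
      rw [Complex.norm_real, Real.norm_eq_abs, abs_of_pos hx0]
    rw [this]
    calc K < ‖t‖ := ht.1
      _ ≤ x * ‖t‖ := le_mul_of_one_le_left (norm_nonneg t) hx
  · rw [Complex.arg_real_mul t hx0]
    exact ht.2

end helpers


noncomputable def fCoef (f : ℝ → ℂ) (ℓ : ℤ) : ℂ :=
  (1/(2*Real.pi : ℂ)) * ∫ x in (0:ℝ)..(2*Real.pi), Complex.exp (-(ℓ * x * Complex.I)) * f x


lemma lift_cont {f : ℝ → ℂ} (hf : Continuous f) {T : ℝ} (hper : Function.Periodic f T) :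
    Continuous hper.lift := by
  rw [isQuotientMap_quotient_mk'.continuous_iff]; exact hf

lemma fourierCoeff_lift {f : ℝ → ℂ} (hper : Function.Periodic f (2*Real.pi)) (ℓ : ℤ) :
    haveI : Fact (0 < 2*Real.pi) := ⟨by positivity⟩
    fourierCoeff hper.lift ℓ = fCoef f ℓ := by
  haveI : Fact (0 < 2*Real.pi) := ⟨by positivity⟩
  rw [fourierCoeff_eq_intervalIntegral _ _ 0, zero_add]
  have : ∀ x : ℝ, (fourier (-ℓ) (x : AddCircle (2*Real.pi))) • hper.lift (x : AddCircle (2*Real.pi))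
      = Complex.exp (-(ℓ * x * Complex.I)) * f x := by
    intro x
    rw [fourier_coe_apply, hper.lift_coe, smul_eq_mul]
    congr 2
    have hπ : (Real.pi : ℂ) ≠ 0 := by exact_mod_cast Real.pi_ne_zero
    field_simp; push_cast; ring
  simp_rw [this]
  rw [real_smul, fCoef]
  norm_num

lemma fourier_expansion_of_finite_support {f : ℝ → ℂ} (hf : Continuous f)
    (hper : Function.Periodic f (2*Real.pi)) (Λ : Finset ℤ)
    (h0 : ∀ ℓ : ℤ, ℓ ∉ Λ → fCoef f ℓ = 0) (θ : ℝ) :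
    f θ = ∑ ℓ ∈ Λ, fCoef f ℓ * Complex.exp (ℓ * θ * Complex.I) := by
  haveI : Fact (0 < 2*Real.pi) := ⟨by positivity⟩
  set fc : C(AddCircle (2*Real.pi), ℂ) := ⟨hper.lift, lift_cont hf hper⟩ with hfc
  have hcoef : ∀ ℓ : ℤ, fourierCoeff (fc : AddCircle (2*Real.pi) → ℂ) ℓ = fCoef f ℓ := by
    intro ℓ; exact fourierCoeff_lift hper ℓ
  have hsummable : Summable (fourierCoeff (fc : AddCircle (2*Real.pi) → ℂ)) := by
    apply summable_of_ne_finset_zero (s := Λ)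
    intro ℓ hℓ; rw [hcoef]; exact h0 ℓ hℓ
  have hsum := has_pointwise_sum_fourier_series_of_summable hsummable (θ : AddCircle (2*Real.pi))
  have hsum2 : HasSum (fun ℓ : ℤ => fourierCoeff (fc : AddCircle (2*Real.pi) → ℂ) ℓ • fourier ℓ (θ : AddCircle (2*Real.pi)))
      (∑ ℓ ∈ Λ, fourierCoeff (fc : AddCircle (2*Real.pi) → ℂ) ℓ • fourier ℓ (θ : AddCircle (2*Real.pi))) := by
    apply hasSum_sum_of_ne_finset_zero
    intro ℓ hℓ
    rw [hcoef, h0 ℓ hℓ, zero_smul]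
  have hfθ : fc (θ : AddCircle (2*Real.pi)) = f θ := hper.lift_coe θ
  have := hsum.unique hsum2
  rw [hfθ] at this
  rw [this]
  refine Finset.sum_congr rfl fun ℓ _ => ?_
  rw [hcoef, smul_eq_mul, fourier_coe_apply]
  congr 2
  have hπ : (Real.pi : ℂ) ≠ 0 := by exact_mod_cast Real.pi_ne_zero
  field_simp; push_cast; ring



lemma circleIntegral_eq_fCoef (g : ℂ → ℂ) (ℓ : ℤ) {r : ℝ} (hr : 0 < r) :
    (∮ z in C(0, r), (z ^ (-ℓ-1) : ℂ) * g z) =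
      (2*Real.pi*Complex.I) * ((r:ℂ)^(-ℓ) * fCoef (fun θ => g ((r:ℂ) * Complex.exp (θ*Complex.I))) ℓ) := by
  have hrc : (r:ℂ) ≠ 0 := by exact_mod_cast hr.ne'
  rw [circleIntegral]
  have : ∀ θ : ℝ, (deriv (circleMap 0 r) θ) • ((circleMap 0 r θ) ^ (-ℓ-1) * g (circleMap 0 r θ))
      = ((Complex.I * (r:ℂ)^(-ℓ)) * (Complex.exp (-(ℓ * θ * Complex.I)) * g ((r:ℂ) * Complex.exp (θ*Complex.I)))) := by
    intro θ
    rw [deriv_circleMap, circleMap_zero, smul_eq_mul]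
    have hz : (r:ℂ) * Complex.exp (θ*Complex.I) ≠ 0 := mul_ne_zero hrc (Complex.exp_ne_zero _)
    have h1 : ((r:ℂ) * Complex.exp (θ*Complex.I)) ^ (-ℓ-1) =
        ((r:ℂ) * Complex.exp (θ*Complex.I)) ^ (-ℓ) * ((r:ℂ) * Complex.exp (θ*Complex.I))⁻¹ := by
      rw [← zpow_sub_one₀ hz]
    have h2 : ((r:ℂ) * Complex.exp (θ*Complex.I)) ^ (-ℓ) = (r:ℂ)^(-ℓ) * Complex.exp (-(ℓ * θ * Complex.I)) := by
      rw [mul_zpow]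
      congr 1
      rw [← Complex.exp_int_mul]
      congr 1
      push_cast; ring
    calc (↑r * Complex.exp (θ*Complex.I) * Complex.I) * (((r:ℂ) * Complex.exp (θ*Complex.I)) ^ (-ℓ-1) * g ((r:ℂ) * Complex.exp (θ*Complex.I)))
        = ((r:ℂ) * Complex.exp (θ*Complex.I)) * ((r:ℂ) * Complex.exp (θ*Complex.I))⁻¹ *
            ((Complex.I * (r:ℂ)^(-ℓ)) * (Complex.exp (-(ℓ * θ * Complex.I)) * g ((r:ℂ) * Complex.exp (θ*Complex.I)))) := by
          rw [h1, h2]; ring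
      _ = _ := by rw [mul_inv_cancel₀ hz, one_mul]
  simp_rw [this]
  rw [intervalIntegral.integral_const_mul, fCoef]
  set J := ∫ x in (0:ℝ)..(2*Real.pi), Complex.exp (-(ℓ * x * Complex.I)) * g ((r:ℂ) * Complex.exp (x*Complex.I)) with hJ
  have hπ : (2*Real.pi : ℂ) ≠ 0 := by
    simp [Real.pi_ne_zero]
  have hrℓ : ((r:ℂ))^ℓ ≠ 0 := zpow_ne_zero _ hrc
  field_simp

lemma coef_radius_indep {g : ℂ → ℂ} {r₁ r₂ : ℝ} (h1 : 0 < r₁)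
    (hg : ∀ w : ℂ, r₁ < ‖w‖ → ‖w‖ < r₂ → DifferentiableAt ℂ g w)
    (ℓ : ℤ) {r r' : ℝ} (hr : r ∈ Set.Ioo r₁ r₂) (hr' : r' ∈ Set.Ioo r₁ r₂) :
    ((r:ℂ)^(-ℓ)) * fCoef (fun θ => g ((r:ℂ) * Complex.exp (θ*Complex.I))) ℓ
      = ((r':ℂ)^(-ℓ)) * fCoef (fun θ => g ((r':ℂ) * Complex.exp (θ*Complex.I))) ℓ := by
  have key : ∀ s s' : ℝ, s ∈ Set.Ioo r₁ r₂ → s' ∈ Set.Ioo r₁ r₂ → s ≤ s' →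
      (∮ z in C(0, s'), (z ^ (-ℓ-1) : ℂ) * g z) = ∮ z in C(0, s), (z ^ (-ℓ-1) : ℂ) * g z := by
    intro s s' hs hs' hss
    have h0s : 0 < s := h1.trans hs.1
    have hd : ∀ z : ℂ, z ∈ Metric.closedBall (0:ℂ) s' \ Metric.ball 0 s →
        DifferentiableAt ℂ (fun z : ℂ => (z ^ (-ℓ-1) : ℂ) * g z) z := by
      intro z hz
      simp only [Metric.mem_closedBall, Metric.mem_ball, dist_zero_right, Set.mem_diff,
        not_lt] at hz
      have habs : r₁ < ‖z‖ ∧ ‖z‖ < r₂ :=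
        ⟨hs.1.trans_le (by simpa using hz.2), lt_of_le_of_lt (by simpa using hz.1) hs'.2⟩
      have hz0 : z ≠ 0 := by
        intro h; rw [h] at habs; simp at habs; linarith [habs.1]
      exact ((differentiableAt_id.zpow (Or.inl hz0)).mul (hg z habs.1 habs.2))
    refine circleIntegral_eq_of_differentiable_on_annulus_off_countable h0s hss
      Set.countable_empty ?_ ?_
    · intro z hz
      exact (hd z hz).continuousAt.continuousWithinAt
    · intro z hz
      exact hd z ⟨Metric.ball_subset_closedBall hz.1.1, fun h => hz.1.2 (Metric.ball_subset_closedBall h)⟩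
  have main : ∀ s s' : ℝ, s ∈ Set.Ioo r₁ r₂ → s' ∈ Set.Ioo r₁ r₂ → s ≤ s' →
      ((s:ℂ)^(-ℓ)) * fCoef (fun θ => g ((s:ℂ) * Complex.exp (θ*Complex.I))) ℓ
      = ((s':ℂ)^(-ℓ)) * fCoef (fun θ => g ((s':ℂ) * Complex.exp (θ*Complex.I))) ℓ := by
    intro s s' hs hs' hss
    have h2πI : (2*Real.pi*Complex.I : ℂ) ≠ 0 := by
      simp [Real.pi_ne_zero, Complex.I_ne_zero]
    apply mul_left_cancel₀ h2πI
    rw [← circleIntegral_eq_fCoef g ℓ (h1.trans hs.1), ← circleIntegral_eq_fCoef g ℓ (h1.trans hs'.1)]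
    exact (key s s' hs hs' hss).symm
  rcases le_total r r' with h | h
  · exact main r r' hr hr' h
  · exact (main r' r hr' hr h).symm



lemma integrand_periodic (g : ℝ → ℂ) (hg : ∀ u, g (u + 2*Real.pi) = g u) (ℓ : ℤ) :
    Function.Periodic (fun u : ℝ => Complex.exp (-(ℓ * u * Complex.I)) * g u) (2*Real.pi) := by
  intro u
  simp only
  rw [hg]
  congr 1
  have : -((ℓ:ℂ) * (((u:ℝ) + 2*Real.pi : ℝ):ℂ) * Complex.I)
      = -(ℓ * u * Complex.I) + (-ℓ : ℤ) * (2*Real.pi*Complex.I) := by push_cast; ring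
  rw [this, Complex.exp_add, Complex.exp_int_mul_two_pi_mul_I, mul_one]

lemma coef_rotation {n : ℕ} (B : Matrix (Fin n) (Fin n) ℂ) (G : ℂ → Fin n → ℂ)
    {c : ℂ} (hc : ‖c‖ = 1) {r : ℝ}
    (hrel : ∀ θ : ℝ, G (c * ((r:ℂ) * Complex.exp (θ*Complex.I)))
       = B.mulVec (G ((r:ℂ) * Complex.exp (θ*Complex.I))))
    (hcont : ∀ j, Continuous (fun θ : ℝ => G ((r:ℂ) * Complex.exp (θ*Complex.I)) j)) (ℓ : ℤ) :
    B.mulVec (fun j => fCoef (fun θ => G ((r:ℂ) * Complex.exp (θ*Complex.I)) j) ℓ)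
      = c ^ ℓ • (fun j => fCoef (fun θ => G ((r:ℂ) * Complex.exp (θ*Complex.I)) j) ℓ) := by
  set φ : ℝ := Complex.arg c with hφ
  have hcφ : c = Complex.exp (φ * Complex.I) := by
    conv_lhs => rw [← Complex.norm_mul_exp_arg_mul_I c]
    rw [hc]; simp [hφ]
  have hcℓ : c ^ ℓ = Complex.exp (ℓ * φ * Complex.I) := by
    rw [hcφ, ← Complex.exp_int_mul]; ring_nf
  funext i
  have hint : ∀ j, IntervalIntegrable
      (fun θ : ℝ => Complex.exp (-(ℓ * θ * Complex.I)) * G ((r:ℂ) * Complex.exp (θ*Complex.I)) j)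
      volume 0 (2*Real.pi) :=
    fun j => (Continuous.mul
      (((continuous_const.mul Complex.continuous_ofReal).mul continuous_const).neg.cexp)
      (hcont j)).intervalIntegrable _ _
  -- step 1 : expand mulVec and swap sum/integral
  have step1 : ∫ θ in (0:ℝ)..(2*Real.pi),
        Complex.exp (-(ℓ * θ * Complex.I)) * (B.mulVec (G ((r:ℂ) * Complex.exp (θ*Complex.I)))) i
      = ∑ j, B i j * ∫ θ in (0:ℝ)..(2*Real.pi),
          Complex.exp (-(ℓ * θ * Complex.I)) * G ((r:ℂ) * Complex.exp (θ*Complex.I)) j := by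
    have := intervalIntegral.integral_finset_sum (μ := volume) (a := (0:ℝ)) (b := 2*Real.pi)
      (s := (Finset.univ : Finset (Fin n)))
      (f := fun j (θ : ℝ) => B i j *
        (Complex.exp (-(ℓ * θ * Complex.I)) * G ((r:ℂ) * Complex.exp (θ*Complex.I)) j))
      (fun j _ => (hint j).const_mul _)
    rw [intervalIntegral.integral_congr (g := fun θ : ℝ => ∑ j, B i j *
        (Complex.exp (-(ℓ * θ * Complex.I)) * G ((r:ℂ) * Complex.exp (θ*Complex.I)) j))
        (fun θ _ => by
          simp only [Matrix.mulVec, dotProduct, Finset.mul_sum]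
          exact Finset.sum_congr rfl fun j _ => by ring), this]
    exact Finset.sum_congr rfl fun j _ => by rw [intervalIntegral.integral_const_mul]
  -- step 2 : substitution and periodicity
  have step2 : ∀ j, ∫ θ in (0:ℝ)..(2*Real.pi),
        Complex.exp (-(ℓ * θ * Complex.I)) * G (c * ((r:ℂ) * Complex.exp (θ*Complex.I))) j
      = c ^ ℓ * ∫ θ in (0:ℝ)..(2*Real.pi),
          Complex.exp (-(ℓ * θ * Complex.I)) * G ((r:ℂ) * Complex.exp (θ*Complex.I)) j := by
    intro j
    have hsub : ∀ θ : ℝ, c * ((r:ℂ) * Complex.exp (θ*Complex.I))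
        = (r:ℂ) * Complex.exp ((((θ + φ : ℝ)):ℂ)*Complex.I) := by
      intro θ
      rw [hcφ]
      push_cast
      rw [add_mul, Complex.exp_add]
      ring
    have hintegrand : ∀ θ : ℝ, Complex.exp (-(ℓ * θ * Complex.I)) * G (c * ((r:ℂ) * Complex.exp (θ*Complex.I))) j
        = c ^ ℓ * ((fun u : ℝ => Complex.exp (-(ℓ * u * Complex.I)) * G ((r:ℂ) * Complex.exp (u*Complex.I)) j) (θ + φ)) := by
      intro θ
      rw [hsub, hcℓ]
      simp only
      rw [← mul_assoc, ← Complex.exp_add]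
      congr 1
      push_cast
      ring
    simp_rw [hintegrand]
    rw [intervalIntegral.integral_const_mul]
    congr 1
    rw [show (∫ x in (0:ℝ)..(2*Real.pi),
          Complex.exp (-(ℓ * ((x + φ : ℝ):ℂ) * Complex.I)) * G ((r:ℂ) * Complex.exp (((x + φ : ℝ):ℂ)*Complex.I)) j)
        = ∫ x in (0:ℝ)+φ..(2*Real.pi)+φ,
          Complex.exp (-(ℓ * x * Complex.I)) * G ((r:ℂ) * Complex.exp (x*Complex.I)) j from
      intervalIntegral.integral_comp_add_right
        (fun u : ℝ => Complex.exp (-(ℓ * u * Complex.I)) * G ((r:ℂ) * Complex.exp (u*Complex.I)) j) φ]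
    have hper : Function.Periodic
        (fun u : ℝ => Complex.exp (-(ℓ * u * Complex.I)) * G ((r:ℂ) * Complex.exp (u*Complex.I)) j)
        (2*Real.pi) := by
      apply integrand_periodic
      intro u
      have : (((u + 2*Real.pi : ℝ)):ℂ) * Complex.I = u * Complex.I + 2*Real.pi*Complex.I := by
        push_cast; ring
      rw [this, Complex.exp_add, Complex.exp_two_pi_mul_I, mul_one]
    have h2 := hper.intervalIntegral_add_eq φ 0
    rw [zero_add] at h2
    rw [show (0:ℝ) + φ = φ by ring, show 2*Real.pi + φ = φ + 2*Real.pi by ring, h2]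
  -- combine
  calc B.mulVec (fun j => fCoef (fun θ => G ((r:ℂ) * Complex.exp (θ*Complex.I)) j) ℓ) i
      = ∑ j, B i j * fCoef (fun θ => G ((r:ℂ) * Complex.exp (θ*Complex.I)) j) ℓ := by
        simp [Matrix.mulVec, dotProduct]
    _ = (1/(2*Real.pi : ℂ)) * ∑ j, B i j * ∫ θ in (0:ℝ)..(2*Real.pi),
          Complex.exp (-(ℓ * θ * Complex.I)) * G ((r:ℂ) * Complex.exp (θ*Complex.I)) j := by
        rw [Finset.mul_sum]
        refine Finset.sum_congr rfl fun j _ => ?_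
        simp only [fCoef]
        ring
    _ = (1/(2*Real.pi : ℂ)) * ∫ θ in (0:ℝ)..(2*Real.pi),
          Complex.exp (-(ℓ * θ * Complex.I)) * (B.mulVec (G ((r:ℂ) * Complex.exp (θ*Complex.I)))) i := by
        rw [step1]
    _ = (1/(2*Real.pi : ℂ)) * ∫ θ in (0:ℝ)..(2*Real.pi),
          Complex.exp (-(ℓ * θ * Complex.I)) * G (c * ((r:ℂ) * Complex.exp (θ*Complex.I))) i := by
        simp_rw [← hrel]
    _ = (1/(2*Real.pi : ℂ)) * (c ^ ℓ * ∫ θ in (0:ℝ)..(2*Real.pi),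
          Complex.exp (-(ℓ * θ * Complex.I)) * G ((r:ℂ) * Complex.exp (θ*Complex.I)) i) := by
        rw [step2 i]
    _ = (c ^ ℓ • (fun j => fCoef (fun θ => G ((r:ℂ) * Complex.exp (θ*Complex.I)) j) ℓ)) i := by
        simp only [Pi.smul_apply, smul_eq_mul, fCoef]
        ring



-- kernel-kill lemma
lemma eigvec_zero_of_not_spectrum {n : ℕ} (B : Matrix (Fin n) (Fin n) ℂ) (z : ℂ)
    (hz : z ∉ spectrum ℂ B) (v : Fin n → ℂ) (hv : B.mulVec v = z • v) : v = 0 := by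
  have hunit : IsUnit ((algebraMap ℂ (Matrix (Fin n) (Fin n) ℂ)) z - B) :=
    spectrum.notMem_iff.mp hz
  have hM : ((algebraMap ℂ (Matrix (Fin n) (Fin n) ℂ)) z - B).mulVec v = 0 := by
    rw [Matrix.sub_mulVec, hv]
    have : ((algebraMap ℂ (Matrix (Fin n) (Fin n) ℂ)) z) = z • (1 : Matrix (Fin n) (Fin n) ℂ) := by
      rw [Algebra.algebraMap_eq_smul_one]
    rw [this, Matrix.smul_mulVec, Matrix.one_mulVec, sub_self]
  have hinj := Matrix.mulVec_injective_iff_isUnit.mpr hunit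
  have : ((algebraMap ℂ (Matrix (Fin n) (Fin n) ℂ)) z - B).mulVec v
      = ((algebraMap ℂ (Matrix (Fin n) (Fin n) ℂ)) z - B).mulVec 0 := by
    rw [hM, Matrix.mulVec_zero]
  exact hinj this

theorem annulus_expansion {n : ℕ} (B : Matrix (Fin n) (Fin n) ℂ)
    {r₁ r₂ : ℝ} (h1 : 0 < r₁) (h12 : r₁ < r₂)
    (G : ℂ → Fin n → ℂ)
    (hG : ∀ w : ℂ, r₁ < ‖w‖ → ‖w‖ < r₂ → DifferentiableAt ℂ G w)
    {c : ℂ} (hc : ‖c‖ = 1)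
    (hrel : ∀ w : ℂ, r₁ < ‖w‖ → ‖w‖ < r₂ → G (c * w) = B.mulVec (G w))
    (Λ : Finset ℤ) (hΛ : ∀ ℓ : ℤ, ℓ ∉ Λ → c ^ ℓ ∉ spectrum ℂ B) :
    ∃ b : ℤ → (Fin n → ℂ), ∀ w : ℂ, r₁ < ‖w‖ → ‖w‖ < r₂ →
      G w = ∑ ℓ ∈ Λ, (w ^ (ℓ:ℤ)) • b ℓ := by
  -- the coefficient vectors
  set vC : ℝ → ℤ → (Fin n → ℂ) :=
    fun r ℓ => fun i => fCoef (fun θ => G ((r:ℂ) * Complex.exp (θ*Complex.I)) i) ℓ with hvC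
  have habs : ∀ (r : ℝ), 0 < r → ∀ θ : ℝ, ‖(r:ℂ) * Complex.exp (θ*Complex.I)‖ = r := by
    intro r hr θ
    rw [norm_mul, Complex.norm_exp]
    simp [abs_of_pos hr]
  have hGcont : ∀ (r : ℝ), r ∈ Set.Ioo r₁ r₂ → ∀ i,
      Continuous (fun θ : ℝ => G ((r:ℂ) * Complex.exp (θ*Complex.I)) i) := by
    intro r hr i
    have hmap : Continuous (fun θ : ℝ => (r:ℂ) * Complex.exp ((θ:ℂ)*Complex.I)) :=
      continuous_const.mul ((Complex.continuous_ofReal.mul continuous_const).cexp)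
    rw [continuous_iff_continuousAt]
    intro θ
    have h0r : 0 < r := h1.trans hr.1
    have hw := hG ((r:ℂ) * Complex.exp ((θ:ℝ)*Complex.I))
      (by rw [habs r h0r θ]; exact hr.1) (by rw [habs r h0r θ]; exact hr.2)
    have hcomp : ContinuousAt ((fun z : ℂ => G z i) ∘
        (fun θ : ℝ => (r:ℂ) * Complex.exp ((θ:ℂ)*Complex.I))) θ :=
      ContinuousAt.comp (continuousAt_pi.mp hw.continuousAt i) hmap.continuousAt
    exact hcomp
  -- coefficients vanish off Λ
  have hkill : ∀ (r : ℝ), r ∈ Set.Ioo r₁ r₂ → ∀ ℓ : ℤ, ℓ ∉ Λ → vC r ℓ = 0 := by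
    intro r hr ℓ hℓ
    have h0r : 0 < r := h1.trans hr.1
    have hrelθ : ∀ θ : ℝ, G (c * ((r:ℂ) * Complex.exp (θ*Complex.I)))
        = B.mulVec (G ((r:ℂ) * Complex.exp (θ*Complex.I))) := by
      intro θ
      exact hrel _ (by rw [habs r h0r θ]; exact hr.1) (by rw [habs r h0r θ]; exact hr.2)
    have := coef_rotation B G hc hrelθ (hGcont r hr) ℓ
    exact eigvec_zero_of_not_spectrum B (c^ℓ) (hΛ ℓ hℓ) _ this
  -- radius independence
  have hradius : ∀ ℓ : ℤ, ∀ r r' : ℝ, r ∈ Set.Ioo r₁ r₂ → r' ∈ Set.Ioo r₁ r₂ →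
      ((r:ℂ)^(-ℓ)) • vC r ℓ = ((r':ℂ)^(-ℓ)) • vC r' ℓ := by
    intro ℓ r r' hr hr'
    funext i
    simp only [Pi.smul_apply, smul_eq_mul, hvC]
    exact coef_radius_indep h1
      (fun w hw1 hw2 => (differentiableAt_pi.mp (hG w hw1 hw2)) i) ℓ hr hr'
  set r₀ : ℝ := (r₁ + r₂)/2 with hr₀
  have hr₀mem : r₀ ∈ Set.Ioo r₁ r₂ := ⟨by simp only [hr₀]; linarith, by simp only [hr₀]; linarith⟩
  refine ⟨fun ℓ => ((r₀:ℂ)^(-ℓ)) • vC r₀ ℓ, ?_⟩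
  intro w hw1 hw2
  set r : ℝ := ‖w‖ with hrdef
  have h0r : 0 < r := h1.trans hw1
  have hrmem : r ∈ Set.Ioo r₁ r₂ := ⟨hw1, hw2⟩
  have hrc : (r:ℂ) ≠ 0 := by exact_mod_cast h0r.ne'
  have hvCr : ∀ ℓ : ℤ, vC r ℓ = ((r:ℂ)^(ℓ:ℤ)) • (((r₀:ℂ)^(-ℓ)) • vC r₀ ℓ) := by
    intro ℓ
    rw [← hradius ℓ r r₀ hrmem hr₀mem, smul_smul, ← zpow_add₀ hrc]
    simp
  have hw_eq : w = (r:ℂ) * Complex.exp (((Complex.arg w : ℝ):ℂ)*Complex.I) := by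
    rw [hrdef]
    exact (Complex.norm_mul_exp_arg_mul_I w).symm
  funext i
  -- expand the i-th component by finite Fourier series
  have hper : Function.Periodic (fun θ : ℝ => G ((r:ℂ) * Complex.exp ((θ:ℂ)*Complex.I)) i)
      (2*Real.pi) := by
    intro θ
    simp only
    congr 2
    push_cast
    rw [add_mul, Complex.exp_add, Complex.exp_two_pi_mul_I, mul_one]
  have hexp := fourier_expansion_of_finite_support (hGcont r hrmem i) hper Λ
    (fun ℓ hℓ => by
      have := congrFun (hkill r hrmem ℓ hℓ) i
      simpa [hvC] using this)
    (Complex.arg w)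
  have hGw : G w i = ∑ ℓ ∈ Λ, vC r ℓ i * Complex.exp (ℓ * (Complex.arg w : ℝ) * Complex.I) := by
    conv_lhs => rw [hw_eq]
    exact hexp
  rw [hGw]
  rw [Finset.sum_apply]
  refine Finset.sum_congr rfl fun ℓ _ => ?_
  rw [hvCr ℓ]
  have hwpow : w ^ (ℓ:ℤ) = (r:ℂ)^(ℓ:ℤ) * Complex.exp (ℓ * (Complex.arg w : ℝ) * Complex.I) := by
    conv_lhs => rw [hw_eq]
    rw [mul_zpow, ← Complex.exp_int_mul]
    ring_nf
  simp only [Pi.smul_apply, smul_eq_mul, hwpow]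
  ring

open Complex in
/-- Let `p > 1`, `B̃₁ ∈ GLₙ(ℂ)`, and `F` a holomorphic vector function on a
sector `S = {t : |t| > K, α < arg t < β}` with `F(pt) = F(t)` and `F(qt) = B̃₁ F(t)` on `S`,
where `exp(2πi log q / log p)` is not a root of unity.  Then the set `Λ` of integers `ℓ`
with `exp(2πi ℓ log q / log p)` an eigenvalue of `B̃₁` is finite, and `F` is a finite sum
`F(t) = Σ_{ℓ ∈ Λ} F_ℓ t^{2πiℓ/log p}` on `S`; in particular `F` extends analytically to the
Riemann surface of `log t`. -/
theorem stmt11 (n : ℕ) (p q : ℝ) (hp : 1 < p) (hq : 1 < q)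
    (B₁ : Matrix (Fin n) (Fin n) ℂ) (hB₁ : IsUnit B₁.det)
    (hroot : ¬ ∃ k : ℕ, 0 < k ∧
      Complex.exp (2 * Real.pi * Complex.I * (Real.log q / Real.log p)) ^ k = 1)
    (K α β : ℝ) (hα : -Real.pi < α) (hαβ : α < β) (hβ : β ≤ Real.pi)
    (S : Set ℂ) (hS : S = {t : ℂ | K < ‖t‖ ∧ α < Complex.arg t ∧ Complex.arg t < β})
    (F : ℂ → (Fin n → ℂ)) (hF : DifferentiableOn ℂ F S)
    (hFp : ∀ t ∈ S, F ((p : ℂ) * t) = F t)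
    (hFq : ∀ t ∈ S, F ((q : ℂ) * t) = B₁.mulVec (F t)) :
    {ℓ : ℤ | Complex.exp (2 * Real.pi * Complex.I * ℓ * (Real.log q / Real.log p))
        ∈ spectrum ℂ B₁}.Finite ∧
    ∃ Λ : Finset ℤ,
      (∀ ℓ ∈ Λ, Complex.exp (2 * Real.pi * Complex.I * ℓ * (Real.log q / Real.log p))
          ∈ spectrum ℂ B₁) ∧
      ∃ Fc : ℤ → (Fin n → ℂ),
        ∀ t ∈ S, F t =
          ∑ ℓ ∈ Λ, (t ^ ((2 * Real.pi * Complex.I * ℓ) / (Real.log p : ℂ))) • Fc ℓ := by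
  subst hS
  set Sset : Set ℂ := {t : ℂ | K < ‖t‖ ∧ α < Complex.arg t ∧ Complex.arg t < β} with hSset
  set L : ℝ := Real.log p with hLdef
  have hL : 0 < L := Real.log_pos hp
  have hLc : (L:ℂ) ≠ 0 := Complex.ofReal_ne_zero.mpr hL.ne'
  have hπ : (0:ℝ) < Real.pi := Real.pi_pos
  have h2πI : (2*(Real.pi:ℂ)*Complex.I) ≠ 0 := by
    simp [Real.pi_ne_zero, Complex.I_ne_zero]
  set c : ℂ := Complex.exp (2 * Real.pi * Complex.I * (Real.log q / Real.log p)) with hcdef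
  have hc0 : c ≠ 0 := Complex.exp_ne_zero _
  have hcabs : ‖c‖ = 1 := by
    rw [hcdef, show (2 * (Real.pi:ℂ) * Complex.I * ((Real.log q : ℂ) / (Real.log p : ℂ)))
        = ((2*Real.pi*(Real.log q / Real.log p) : ℝ) : ℂ) * Complex.I from by push_cast; ring]
    exact Complex.norm_exp_ofReal_mul_I _
  have hcpow : ∀ ℓ : ℤ, c ^ ℓ
      = Complex.exp (2 * Real.pi * Complex.I * ℓ * (Real.log q / Real.log p)) := by
    intro ℓ
    rw [hcdef, ← Complex.exp_int_mul]
    congr 1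
    push_cast
    ring
  have hinj : Function.Injective (fun ℓ : ℤ => c ^ ℓ) := zpow_inj_of_not_root hc0 hroot
  have hfin : {ℓ : ℤ | Complex.exp (2 * Real.pi * Complex.I * ℓ * (Real.log q / Real.log p))
      ∈ spectrum ℂ B₁}.Finite := by
    have heq : {ℓ : ℤ | Complex.exp (2 * Real.pi * Complex.I * ℓ * (Real.log q / Real.log p))
        ∈ spectrum ℂ B₁} = (fun ℓ : ℤ => c ^ ℓ) ⁻¹' (spectrum ℂ B₁) := by
      ext ℓ
      simp [Set.mem_preimage, hcpow ℓ]
    rw [heq]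
    exact Set.Finite.preimage hinj.injOn (B₁.finite_spectrum)
  refine ⟨hfin, ?_⟩
  by_cases h0S : (0:ℂ) ∈ Sset
  · -- degenerate case : 0 ∈ S, F is constant on S
    have hconst : ∀ t ∈ Sset, F t = F 0 := by
      intro t ht
      by_cases ht0 : t = 0
      · rw [ht0]
      · have hK0 : K < 0 := by simpa using h0S.1
        have hx : ∀ k : ℕ, (0:ℝ) < (1/p)^k := fun k => pow_pos (by positivity) k
        have hmem : ∀ k : ℕ, (((1/p)^k : ℝ) : ℂ) * t ∈ Sset := by
          intro k
          refine ⟨lt_of_lt_of_le hK0 (norm_nonneg _), ?_, ?_⟩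
          · rw [Complex.arg_real_mul t (hx k)]; exact ht.2.1
          · rw [Complex.arg_real_mul t (hx k)]; exact ht.2.2
        have hFk : ∀ k : ℕ, F ((((1/p)^k : ℝ) : ℂ) * t) = F t := by
          intro k
          induction k with
          | zero => norm_num
          | succ k ih =>
            have h1 : F ((p:ℂ) * ((((1/p)^(k+1) : ℝ) : ℂ) * t)) = F ((((1/p)^(k+1) : ℝ) : ℂ) * t) :=
              hFp _ (hmem (k+1))
            have h2 : (p:ℂ) * ((((1/p)^(k+1) : ℝ) : ℂ) * t) = (((1/p)^k : ℝ) : ℂ) * t := by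
              have hp0 : (p:ℂ) ≠ 0 := by
                exact_mod_cast (by positivity : (0:ℝ) < p).ne'
              push_cast
              field_simp
              ring_nf
              rw [mul_inv_cancel₀ hp0, one_mul]
            rw [h2] at h1
            rw [← h1, ih]
        have htend : Filter.Tendsto (fun k : ℕ => (((1/p)^k : ℝ) : ℂ) * t)
            Filter.atTop (nhds 0) := by
          have h1 : Filter.Tendsto (fun k : ℕ => ((1/p)^k : ℝ)) Filter.atTop (nhds 0) := by
            apply tendsto_pow_atTop_nhds_zero_of_lt_one (by positivity)
            rw [div_lt_one (by positivity)]
            exact hp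
          have h2 : Filter.Tendsto (fun k : ℕ => (((1/p)^k : ℝ) : ℂ)) Filter.atTop (nhds 0) := by
            exact (Complex.continuous_ofReal.tendsto 0).comp h1
          simpa using h2.mul_const t
        have hcw : ContinuousWithinAt F Sset 0 := (hF.continuousOn) 0 h0S
        have htend2 : Filter.Tendsto (fun k : ℕ => (((1/p)^k : ℝ) : ℂ) * t)
            Filter.atTop (nhdsWithin 0 Sset) :=
          tendsto_nhdsWithin_of_tendsto_nhds_of_eventually_within _ htend
            (Filter.Eventually.of_forall hmem)
        have hcomp : Filter.Tendsto (fun k : ℕ => F ((((1/p)^k : ℝ) : ℂ) * t))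
            Filter.atTop (nhds (F 0)) := hcw.tendsto.comp htend2
        have hconstseq : Filter.Tendsto (fun _ : ℕ => F t) Filter.atTop (nhds (F 0)) := by
          have : (fun k : ℕ => F ((((1/p)^k : ℝ) : ℂ) * t)) = fun _ : ℕ => F t := by
            funext k; exact hFk k
          rwa [this] at hcomp
        exact tendsto_const_nhds_iff.mp hconstseq
    by_cases hv : F 0 = 0
    · refine ⟨∅, by simp, fun _ => 0, fun t ht => by simp [hconst t ht, hv]⟩
    · have heig : B₁.mulVec (F 0) = (1:ℂ) • (F 0) := by
        have h := hFq 0 h0S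
        rw [mul_zero] at h
        rw [← h, one_smul]
      have h1spec : Complex.exp (2 * Real.pi * Complex.I * ((0:ℤ):ℂ)
          * (Real.log q / Real.log p)) ∈ spectrum ℂ B₁ := by
        have : Complex.exp (2 * Real.pi * Complex.I * ((0:ℤ):ℂ)
            * (Real.log q / Real.log p)) = 1 := by
          norm_num
        rw [this]
        by_contra hns
        exact hv (eigvec_zero_of_not_spectrum B₁ 1 hns (F 0) heig)
      refine ⟨{0}, ?_, fun _ => F 0, ?_⟩
      · intro ℓ hℓ
        rw [Finset.mem_singleton] at hℓ
        subst hℓ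
        exact h1spec
      · intro t ht
        rw [hconst t ht]
        norm_num
  · -- main case : 0 ∉ S
    have ht0 : ∀ t ∈ Sset, t ≠ 0 := fun t ht h => h0S (h ▸ ht)
    have hSopen : IsOpen Sset := by
      apply sector_isOpen hα hβ
      rintro ⟨h1, h2, h3⟩
      exact h0S ⟨by simpa using h1, by simpa [Complex.arg_zero] using h2,
        by simpa [Complex.arg_zero] using h3⟩
    have hargS : ∀ t ∈ Sset, α < Complex.arg t ∧ Complex.arg t < β := fun t ht => ht.2
    set ρ1 : ℝ := Real.exp (-(2*Real.pi*β)/L) with hρ1def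
    set ρ2 : ℝ := Real.exp (-(2*Real.pi*α)/L) with hρ2def
    have hρ1 : 0 < ρ1 := Real.exp_pos _
    have hρ12 : ρ1 < ρ2 := by
      apply Real.exp_lt_exp.mpr
      apply (div_lt_div_iff_of_pos_right hL).mpr
      nlinarith
    set wmap : ℂ → ℂ := fun t => Complex.exp (2*Real.pi*Complex.I * Complex.log t / L)
      with hwmapdef
    have habsw : ∀ t : ℂ, ‖wmap t‖
        = Real.exp (-(2*Real.pi * Complex.arg t)/L) := by
      intro t
      rw [hwmapdef]
      simp only
      rw [Complex.norm_exp]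
      congr 1
      have harg : 2*(Real.pi:ℂ)*Complex.I * Complex.log t / (L:ℂ)
          = ((2*Real.pi/L : ℝ):ℂ) * (Complex.I * Complex.log t) := by
        push_cast
        field_simp
      rw [harg]
      simp [Complex.mul_re, Complex.mul_im, Complex.log_im]
      try field_simp
      try ring
    have hwA : ∀ t ∈ Sset, ρ1 < ‖wmap t‖ ∧ ‖wmap t‖ < ρ2 := by
      intro t ht
      rw [habsw t]
      constructor
      · apply Real.exp_lt_exp.mpr
        apply (div_lt_div_iff_of_pos_right hL).mpr
        nlinarith [ht.2.2]
      · apply Real.exp_lt_exp.mpr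
        apply (div_lt_div_iff_of_pos_right hL).mpr
        nlinarith [ht.2.1]
    -- invariance under integer powers of p
    have hFpk : ∀ k : ℕ, ∀ t ∈ Sset, ((p:ℂ)^k * t ∈ Sset ∧ F ((p:ℂ)^k * t) = F t) := by
      intro k
      induction k with
      | zero => intro t ht; rw [pow_zero, one_mul]; exact ⟨ht, rfl⟩
      | succ k ih =>
        intro t ht
        have h1 := ih t ht
        have h2 : (p:ℂ) * ((p:ℂ)^k * t) ∈ Sset := scale_mem_sector hp.le h1.1
        have h3 : F ((p:ℂ) * ((p:ℂ)^k * t)) = F ((p:ℂ)^k * t) := hFp _ h1.1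
        have h4 : (p:ℂ)^(k+1) * t = (p:ℂ) * ((p:ℂ)^k * t) := by ring
        exact ⟨h4 ▸ h2, by rw [h4, h3, h1.2]⟩
    -- the fibers of wmap on S
    have hfiber : ∀ t ∈ Sset, ∀ t' ∈ Sset, wmap t = wmap t' → F t = F t' := by
      intro t ht t' ht' hw
      rw [hwmapdef] at hw
      simp only at hw
      obtain ⟨m, hm⟩ := Complex.exp_eq_exp_iff_exists_int.mp hw
      have hstep : 2*(Real.pi:ℂ)*Complex.I * Complex.log t
          = 2*Real.pi*Complex.I * Complex.log t' + ((m:ℂ) * (2*Real.pi*Complex.I)) * L := by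
        have h2 := congrArg (fun z : ℂ => z * (L:ℂ)) hm
        simp only [add_mul, div_mul_cancel₀ _ hLc] at h2
        exact h2
      have hlog : Complex.log t = Complex.log t' + (m:ℂ)*(L:ℂ) := by
        apply mul_left_cancel₀ h2πI
        rw [mul_add, hstep]
        ring
      have hexpmL : Complex.exp ((m:ℂ)*(L:ℂ)) = ((p:ℝ):ℂ) ^ m := by
        rw [Complex.exp_int_mul]
        congr 1
        rw [← Complex.ofReal_exp, hLdef, Real.exp_log (lt_trans one_pos hp)]
      have hts : t = ((p:ℝ):ℂ) ^ m * t' := by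
        have h3 : Complex.exp (Complex.log t) = Complex.exp (Complex.log t' + (m:ℂ)*(L:ℂ)) := by
          rw [hlog]
        rw [Complex.exp_log (ht0 t ht), Complex.exp_add, Complex.exp_log (ht0 t' ht'),
          hexpmL] at h3
        rw [h3]
        ring
      have hpc : ((p:ℝ):ℂ) ≠ 0 := by exact_mod_cast (lt_trans one_pos hp).ne'
      obtain ⟨k, hk | hk⟩ : ∃ k : ℕ, m = k ∨ m = -k := ⟨m.natAbs, Int.natAbs_eq m⟩
      · rw [hts, hk, zpow_natCast]
        exact (hFpk k t' ht').2
      · have ht' : t' = (p:ℂ)^k * t := by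
          rw [hts, hk, zpow_neg, zpow_natCast]
          field_simp
        rw [ht']
        exact ((hFpk k t ht).2).symm
    -- choice of the branch shift M
    obtain ⟨M, hM⟩ := exists_nat_gt ((Real.log (max K 1) + L/2)/L)
    have hMK : ∀ x : ℝ, -(L/2) < x → K < Real.exp (x + M*L) := by
      intro x hx
      have h1 : (0:ℝ) < max K 1 := lt_of_lt_of_le one_pos (le_max_right K 1)
      have h2 : Real.log (max K 1) < x + M*L := by
        have h3 := (div_lt_iff₀ hL).mp hM
        linarith
      calc K ≤ max K 1 := le_max_left K 1
        _ = Real.exp (Real.log (max K 1)) := (Real.exp_log h1).symm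
        _ < Real.exp (x + M*L) := Real.exp_lt_exp.mpr h2
    -- the generic section construction
    have hσgen : ∀ (zw : ℂ) (w : ℂ), ρ1 < ‖w‖ → ‖w‖ < ρ2 →
        zw.re = Real.log (‖w‖) → -Real.pi < zw.im →
        Complex.exp zw = w →
        (Complex.exp ((L:ℂ)/(2*Real.pi*Complex.I) * zw + ((M*L:ℝ):ℂ)) ∈ Sset ∧
         wmap (Complex.exp ((L:ℂ)/(2*Real.pi*Complex.I) * zw + ((M*L:ℝ):ℂ))) = w) := by
      intro zw w hw1 hw2 hre him hexp
      have hw0 : (0:ℝ) < ‖w‖ := lt_trans hρ1 hw1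
      set s : ℂ := (L:ℂ)/(2*Real.pi*Complex.I) * zw + ((M*L:ℝ):ℂ) with hsdef
      have hsre : s.re = L/(2*Real.pi) * zw.im + M*L := (exp_affine_re_im L (M*L) zw).1
      have hsim : s.im = -(L/(2*Real.pi)) * Real.log (‖w‖) := by
        rw [(exp_affine_re_im L (M*L) zw).2, hre]
      have hLπpos : (0:ℝ) < L/(2*Real.pi) := by positivity
      have hsimα : α < s.im := by
        rw [hsim]
        have h5 : Real.log (‖w‖) < -(2*Real.pi*α)/L := by
          calc Real.log (‖w‖) < Real.log ρ2 := Real.log_lt_log hw0 hw2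
            _ = -(2*Real.pi*α)/L := by rw [hρ2def, Real.log_exp]
        have h6 : L/(2*Real.pi) * Real.log (‖w‖)
            < L/(2*Real.pi) * (-(2*Real.pi*α)/L) := by
          exact mul_lt_mul_of_pos_left h5 hLπpos
        have h7 : L/(2*Real.pi) * (-(2*Real.pi*α)/L) = -α := by
          field_simp
        linarith
      have hsimβ : s.im < β := by
        rw [hsim]
        have h5 : -(2*Real.pi*β)/L < Real.log (‖w‖) := by
          calc -(2*Real.pi*β)/L = Real.log ρ1 := by rw [hρ1def, Real.log_exp]
            _ < Real.log (‖w‖) := Real.log_lt_log hρ1 hw1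
        have h6 : L/(2*Real.pi) * (-(2*Real.pi*β)/L)
            < L/(2*Real.pi) * Real.log (‖w‖) :=
          mul_lt_mul_of_pos_left h5 hLπpos
        have h7 : L/(2*Real.pi) * (-(2*Real.pi*β)/L) = -β := by
          field_simp
        linarith
      have hsimIoc : -Real.pi < s.im ∧ s.im ≤ Real.pi :=
        ⟨lt_trans hα hsimα, le_trans hsimβ.le hβ⟩
      have hargexp : Complex.arg (Complex.exp s) = s.im := by
        conv_lhs => rw [← Complex.log_im (Complex.exp s)]
        rw [Complex.log_exp hsimIoc.1 hsimIoc.2]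
      have hmem : Complex.exp s ∈ Sset := by
        refine ⟨?_, ?_, ?_⟩
        · have hnorm : ‖Complex.exp s‖ = Real.exp s.re := Complex.norm_exp s
          rw [hnorm, hsre]
          apply hMK
          have h8 : L/(2*Real.pi) * (-Real.pi) < L/(2*Real.pi) * zw.im :=
            mul_lt_mul_of_pos_left him hLπpos
          have h9 : L/(2*Real.pi) * (-Real.pi) = -(L/2) := by
            field_simp
          linarith
        · rw [hargexp]; exact hsimα
        · rw [hargexp]; exact hsimβ
      have hwmap : wmap (Complex.exp s) = w := by
        rw [hwmapdef]
        simp only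
        rw [Complex.log_exp hsimIoc.1 hsimIoc.2]
        have hs2 : 2*(Real.pi:ℂ)*Complex.I * s / (L:ℂ) = zw + (M:ℤ) * (2*Real.pi*Complex.I) := by
          rw [hsdef]
          push_cast
          field_simp
        rw [hs2, Complex.exp_add, hexp, Complex.exp_int_mul_two_pi_mul_I, mul_one]
      exact ⟨hmem, hwmap⟩
    set σfun : ℂ → ℂ :=
      fun w => Complex.exp ((L:ℂ)/(2*Real.pi*Complex.I) * Complex.log w + ((M*L:ℝ):ℂ))
      with hσdef
    set σ2fun : ℂ → ℂ :=
      fun w => Complex.exp ((L:ℂ)/(2*Real.pi*Complex.I) * (Complex.log (-w) + Real.pi * Complex.I)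
        + ((M*L:ℝ):ℂ)) with hσ2def
    have habs0 : ∀ w : ℂ, ρ1 < ‖w‖ → w ≠ 0 := by
      intro w hw h
      rw [h] at hw
      simp at hw
      linarith
    have hσ : ∀ w : ℂ, ρ1 < ‖w‖ → ‖w‖ < ρ2 →
        σfun w ∈ Sset ∧ wmap (σfun w) = w := by
      intro w hw1 hw2
      exact hσgen (Complex.log w) w hw1 hw2 (Complex.log_re w)
        (by rw [Complex.log_im]; exact Complex.neg_pi_lt_arg w)
        (Complex.exp_log (habs0 w hw1))
    have hσ2 : ∀ w : ℂ, ρ1 < ‖w‖ → ‖w‖ < ρ2 →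
        σ2fun w ∈ Sset ∧ wmap (σ2fun w) = w := by
      intro w hw1 hw2
      have hw0 : w ≠ 0 := habs0 w hw1
      refine hσgen (Complex.log (-w) + Real.pi * Complex.I) w hw1 hw2 ?_ ?_ ?_
      · simp [Complex.log_re]
      · have h := Complex.neg_pi_lt_arg (-w)
        simp only [Complex.add_im, Complex.log_im, Complex.mul_im, Complex.ofReal_re,
          Complex.I_im, Complex.ofReal_im, Complex.I_re]
        nlinarith
      · rw [Complex.exp_add, Complex.exp_log (neg_ne_zero.mpr hw0), Complex.exp_pi_mul_I]
        ring
    -- the function on the annulus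
    set G : ℂ → (Fin n → ℂ) := fun w => F (σfun w) with hGdef
    have hAopen : IsOpen {w : ℂ | ρ1 < ‖w‖ ∧ ‖w‖ < ρ2} := by
      have h := IsOpen.preimage (continuous_norm (E := ℂ)) (isOpen_Ioo (a := ρ1) (b := ρ2))
      exact h
    have hG : ∀ w : ℂ, ρ1 < ‖w‖ → ‖w‖ < ρ2 → DifferentiableAt ℂ G w := by
      intro w hw1 hw2
      have hw0 : w ≠ 0 := habs0 w hw1
      by_cases hws : w ∈ Complex.slitPlane
      · have hσdiff : DifferentiableAt ℂ σfun w := by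
          apply DifferentiableAt.cexp
          apply DifferentiableAt.add_const
          exact (Complex.differentiableAt_log hws).const_mul _
        have hFd : DifferentiableAt ℂ F (σfun w) :=
          hF.differentiableAt (hSopen.mem_nhds (hσ w hw1 hw2).1)
        exact hFd.comp w hσdiff
      · have hnw : -w ∈ Complex.slitPlane := by
          rw [Complex.mem_slitPlane_iff] at hws ⊢
          push_neg at hws
          refine Or.inl ?_
          have hre : w.re < 0 :=
            lt_of_le_of_ne hws.1 (fun h => hw0 (Complex.ext h hws.2))
          simp only [Complex.neg_re]
          linarith
        have hσ2diff : DifferentiableAt ℂ σ2fun w := by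
          apply DifferentiableAt.cexp
          apply DifferentiableAt.add_const
          apply DifferentiableAt.const_mul
          apply DifferentiableAt.add_const
          exact (Complex.differentiableAt_log hnw).comp w differentiable_neg.differentiableAt
        have hFd2 : DifferentiableAt ℂ (fun w => F (σ2fun w)) w :=
          DifferentiableAt.comp w
            (hF.differentiableAt (hSopen.mem_nhds (hσ2 w hw1 hw2).1)) hσ2diff
        apply hFd2.congr_of_eventuallyEq
        apply Filter.eventuallyEq_of_mem (hAopen.mem_nhds ⟨hw1, hw2⟩)
        intro w' hw'
        exact hfiber (σfun w') (hσ w' hw'.1 hw'.2).1 (σ2fun w') (hσ2 w' hw'.1 hw'.2).1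
          (by rw [(hσ w' hw'.1 hw'.2).2, (hσ2 w' hw'.1 hw'.2).2])
    have hGrel : ∀ w : ℂ, ρ1 < ‖w‖ → ‖w‖ < ρ2 →
        G (c*w) = B₁.mulVec (G w) := by
      intro w hw1 hw2
      have hcw1 : ρ1 < ‖c*w‖ := by rw [norm_mul, hcabs, one_mul]; exact hw1
      have hcw2 : ‖c*w‖ < ρ2 := by rw [norm_mul, hcabs, one_mul]; exact hw2
      have hσw := hσ w hw1 hw2
      have hσcw := hσ (c*w) hcw1 hcw2
      have hq' : (q:ℂ) * σfun w ∈ Sset := scale_mem_sector hq.le hσw.1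
      have hwq : wmap ((q:ℂ) * σfun w) = c * w := by
        rw [hwmapdef]
        simp only
        rw [Complex.log_ofReal_mul (lt_trans one_pos hq) (Complex.exp_ne_zero _)]
        rw [show 2*(Real.pi:ℂ)*Complex.I * ((Real.log q : ℂ) + Complex.log (σfun w))/(L:ℂ)
            = 2*Real.pi*Complex.I * ((Real.log q : ℂ)/(L:ℂ))
              + 2*Real.pi*Complex.I * Complex.log (σfun w) / (L:ℂ) from by ring]
        rw [Complex.exp_add]
        have h1 : Complex.exp (2*(Real.pi:ℂ)*Complex.I * ((Real.log q : ℂ)/(L:ℂ))) = c := by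
          rw [hcdef, hLdef]
        have h2 : Complex.exp (2*(Real.pi:ℂ)*Complex.I * Complex.log (σfun w) / (L:ℂ))
            = w := hσw.2
        rw [h1, h2]
      calc G (c*w) = F (σfun (c*w)) := rfl
        _ = F ((q:ℂ) * σfun w) := hfiber _ hσcw.1 _ hq' (by rw [hσcw.2, hwq])
        _ = B₁.mulVec (F (σfun w)) := hFq _ hσw.1
    have hΛmem : ∀ ℓ ∈ hfin.toFinset,
        Complex.exp (2 * Real.pi * Complex.I * ℓ * (Real.log q / Real.log p))
          ∈ spectrum ℂ B₁ := fun ℓ hℓ => (Set.Finite.mem_toFinset hfin).mp hℓ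
    have hΛc : ∀ ℓ : ℤ, ℓ ∉ hfin.toFinset → c ^ ℓ ∉ spectrum ℂ B₁ := by
      intro ℓ hℓ hmem
      apply hℓ
      rw [Set.Finite.mem_toFinset hfin]
      simp only [Set.mem_setOf_eq]
      rw [← hcpow ℓ]
      exact hmem
    obtain ⟨b, hb⟩ := annulus_expansion B₁ hρ1 hρ12 G hG hcabs hGrel hfin.toFinset hΛc
    refine ⟨hfin.toFinset, hΛmem, fun ℓ => b ℓ, ?_⟩
    intro t ht
    have hwt := hwA t ht
    have hwmem := hσ (wmap t) hwt.1 hwt.2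
    have hFt : F t = G (wmap t) :=
      hfiber t ht (σfun (wmap t)) hwmem.1 (hwmem.2.symm)
    rw [hFt, hb (wmap t) hwt.1 hwt.2]
    refine Finset.sum_congr rfl fun ℓ _ => ?_
    congr 1
    rw [Complex.cpow_def_of_ne_zero (ht0 t ht)]
    rw [hwmapdef]
    simp only
    rw [← Complex.exp_int_mul]
    congr 1
    field_simp
end

section
/- Let p ≥ 2 be an integer, A(x) ∈ GL_n(C(x)), and suppose g is a function meromorphic on C, holomorphic on |x| > r_0/2 for some r_0 > 1 along with A(x), and satisfying g(x^p) = A(x) g(x) for |x| > r_0. Then g has polynomial growth at infinity: there exist constants L, d, M' > 0 with |g(x)| ≤ L (log|x|)^d |x|^{M'} for |x| > r_0. -/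
open Polynomial Filter

lemma polyUpper (P : Polynomial ℂ) :
    ∃ C : ℝ, 1 ≤ C ∧ ∀ x : ℂ, 1 ≤ ‖x‖ → ‖P.eval x‖ ≤ C * ‖x‖ ^ P.natDegree := by
  refine ⟨1 + ∑ i ∈ Finset.range (P.natDegree + 1), ‖P.coeff i‖,
    le_add_of_nonneg_right (Finset.sum_nonneg fun _ _ => norm_nonneg _), fun x hx => ?_⟩
  have h1 : ‖P.eval x‖ ≤ ∑ i ∈ Finset.range (P.natDegree + 1), ‖P.coeff i‖ * ‖x‖ ^ P.natDegree := by
    rw [Polynomial.eval_eq_sum_range]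
    refine (norm_sum_le _ _).trans (Finset.sum_le_sum fun i hi => ?_)
    rw [norm_mul, norm_pow]
    exact mul_le_mul_of_nonneg_left
      (pow_le_pow_right₀ hx (Nat.lt_succ_iff.1 (Finset.mem_range.1 hi))) (norm_nonneg _)
  rw [← Finset.sum_mul] at h1
  refine h1.trans (mul_le_mul_of_nonneg_right (by linarith) (pow_nonneg (by linarith) _))

lemma polyLower (r : ℝ) (hr : 0 < r) (P : Polynomial ℂ)
    (hP : ∀ x : ℂ, r ≤ ‖x‖ → P.eval x ≠ 0) :
    ∃ c : ℝ, 0 < c ∧ ∀ x : ℂ, r ≤ ‖x‖ → c ≤ ‖P.eval x‖ := by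
  have hrx : ‖(r : ℂ)‖ = r := by simp [abs_of_pos hr]
  by_cases hdeg : 0 < P.degree
  · have ht : Tendsto (fun x : ℂ => ‖P.eval x‖) (Filter.comap norm Filter.atTop) Filter.atTop :=
      P.tendsto_norm_atTop hdeg tendsto_comap
    have hev := ht.eventually (Filter.eventually_ge_atTop 1)
    rw [Filter.eventually_comap] at hev
    obtain ⟨R, hR⟩ := Filter.eventually_atTop.1 hev
    have hR' : ∀ x : ℂ, R ≤ ‖x‖ → 1 ≤ ‖P.eval x‖ := fun x hx => hR ‖x‖ hx x rfl
    set S : Set ℂ := Metric.closedBall 0 (max r R) ∩ {x : ℂ | r ≤ ‖x‖} with hS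
    have hcpt : IsCompact S :=
      (isCompact_closedBall 0 _).inter_right (isClosed_le continuous_const continuous_norm)
    have hne : (r : ℂ) ∈ S := by
      constructor
      · simp only [Metric.mem_closedBall, dist_zero_right, hrx]; exact le_max_left _ _
      · simp only [Set.mem_setOf_eq, hrx]; exact le_refl r
    obtain ⟨x₀, hx₀S, hmin⟩ := hcpt.exists_isMinOn ⟨_, hne⟩
      (Continuous.continuousOn (P.continuous.norm))
    refine ⟨min 1 ‖P.eval x₀‖, lt_min one_pos (norm_pos_iff.2 (hP x₀ hx₀S.2)), fun x hx => ?_⟩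
    by_cases hxR : ‖x‖ ≤ max r R
    · exact (min_le_right _ _).trans (hmin ⟨by simp only [Metric.mem_closedBall, dist_zero_right]; exact hxR, hx⟩)
    · exact (min_le_left _ _).trans (hR' x (le_of_lt (lt_of_le_of_lt (le_max_right r R)
        (not_le.1 hxR))))
  · have hP0 : P = Polynomial.C (P.coeff 0) := Polynomial.eq_C_of_degree_le_zero (not_lt.1 hdeg)
    refine ⟨‖P.coeff 0‖, ?_, fun x hx => ?_⟩
    · have := hP (r : ℂ) (by rw [hrx])
      rw [hP0] at this
      simpa using norm_pos_iff.2 (by simpa using this)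
    · rw [hP0]; simp

lemma ratBound (r : ℝ) (hr : 1 < r) (f : RatFunc ℂ)
    (hden : ∀ x : ℂ, r ≤ ‖x‖ → f.denom.eval x ≠ 0) :
    ∃ K M : ℝ, 1 ≤ K ∧ 1 ≤ M ∧ ∀ x : ℂ, r ≤ ‖x‖ →
      ‖f.eval (RingHom.id ℂ) x‖ ≤ K * ‖x‖ ^ M := by
  obtain ⟨C, hC1, hC⟩ := polyUpper f.num
  obtain ⟨c, hc0, hc⟩ := polyLower r (by linarith) f.denom hden
  refine ⟨max 1 (C / c), max 1 (f.num.natDegree : ℝ), le_max_left _ _, le_max_left _ _,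
    fun x hx => ?_⟩
  have hx1 : (1 : ℝ) ≤ ‖x‖ := by linarith
  have heval : f.eval (RingHom.id ℂ) x = f.num.eval x / f.denom.eval x := rfl
  rw [heval, norm_div]
  calc ‖f.num.eval x‖ / ‖f.denom.eval x‖
      ≤ (C * ‖x‖ ^ f.num.natDegree) / c :=
        div_le_div₀ (by positivity) (hC x hx1) hc0 (hc x hx)
    _ = (C / c) * ‖x‖ ^ f.num.natDegree := by ring
    _ ≤ max 1 (C / c) * ‖x‖ ^ ((f.num.natDegree : ℝ)) := by
        rw [← Real.rpow_natCast ‖x‖]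
        exact mul_le_mul_of_nonneg_right (le_max_right _ _) (Real.rpow_nonneg (by linarith) _)
    _ ≤ max 1 (C / c) * ‖x‖ ^ max 1 ((f.num.natDegree : ℝ)) :=
        mul_le_mul_of_nonneg_left
          (Real.rpow_le_rpow_of_exponent_le hx1 (le_max_right _ _))
          (le_trans zero_le_one (le_max_left _ _))

/-- Let `p ≥ 2`, `A(x) ∈ GLₙ(ℂ(x))`, and `g` a (vector) function holomorphic
on `|x| > r₀/2` (for some `r₀ > 1`, where `A` has no poles either) satisfying
`g(x^p) = A(x) g(x)` for `|x| > r₀`.  Then `g` has polynomial growth at infinity: there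
are `L, d, M' > 0` with `‖g(x)‖ ≤ L (log|x|)^d |x|^{M'}` for `|x| > r₀`. -/
theorem stmt12 (p n : ℕ) (hp : 2 ≤ p) (r₀ : ℝ) (hr₀ : 1 < r₀)
    (A : Matrix (Fin n) (Fin n) (RatFunc ℂ)) (hA : IsUnit A.det)
    (hApoles : ∀ i j (x : ℂ), r₀ / 2 < ‖x‖ → Polynomial.eval x (A i j).denom ≠ 0)
    (g : ℂ → (Fin n → ℂ))
    (hg : DifferentiableOn ℂ g {x : ℂ | r₀ / 2 < ‖x‖})
    (heq : ∀ x : ℂ, r₀ < ‖x‖ →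
      g (x ^ p) = (A.map (fun a => a.eval (RingHom.id ℂ) x)).mulVec (g x)) :
    ∃ L d M' : ℝ, 0 < L ∧ 0 < d ∧ 0 < M' ∧
      ∀ x : ℂ, r₀ < ‖x‖ → ∀ i, ‖g x i‖ ≤ L * (Real.log ‖x‖) ^ d * ‖x‖ ^ M' := by
  rcases Nat.eq_zero_or_pos n with hn | hn
  · exact ⟨1, 1, 1, one_pos, one_pos, one_pos,
      fun x hx i => absurd i.isLt (by omega)⟩
  have hp0 : (p : ℝ) ≠ 0 := by positivity
  have hp1 : (1 : ℝ) < (p : ℝ) := by exact_mod_cast by omega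
  have hr0' : (0 : ℝ) < r₀ := by linarith
  -- entrywise bounds
  have hentry : ∀ i j : Fin n, ∃ K M : ℝ, 1 ≤ K ∧ 1 ≤ M ∧ ∀ x : ℂ, r₀ ≤ ‖x‖ →
      ‖(A i j).eval (RingHom.id ℂ) x‖ ≤ K * ‖x‖ ^ M :=
    fun i j => ratBound r₀ hr₀ (A i j) (fun x hx => hApoles i j x (by linarith))
  choose K M hK1 hM1 hKM using hentry
  set Kb : ℝ := ∑ i : Fin n, ∑ j : Fin n, K i j with hKb_def
  set Mb : ℝ := ∑ i : Fin n, ∑ j : Fin n, M i j with hMb_def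
  have hKb : ∀ i j : Fin n, K i j ≤ Kb := by
    intro i j
    refine le_trans ?_ (Finset.single_le_sum (f := fun i => ∑ j, K i j)
      (fun i _ => Finset.sum_nonneg fun j _ => by linarith [hK1 i j]) (Finset.mem_univ i))
    exact Finset.single_le_sum (fun j _ => by linarith [hK1 i j]) (Finset.mem_univ j)
  have hMb : ∀ i j : Fin n, M i j ≤ Mb := by
    intro i j
    refine le_trans ?_ (Finset.single_le_sum (f := fun i => ∑ j, M i j)
      (fun i _ => Finset.sum_nonneg fun j _ => by linarith [hM1 i j]) (Finset.mem_univ i))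
    exact Finset.single_le_sum (fun j _ => by linarith [hM1 i j]) (Finset.mem_univ j)
  have i₀ : Fin n := ⟨0, hn⟩
  have hKb1 : 1 ≤ Kb := le_trans (hK1 i₀ i₀) (hKb i₀ i₀)
  have hMb1 : 1 ≤ Mb := le_trans (hM1 i₀ i₀) (hMb i₀ i₀)
  have hentryb : ∀ (i j : Fin n) (x : ℂ), r₀ ≤ ‖x‖ →
      ‖(A i j).eval (RingHom.id ℂ) x‖ ≤ Kb * ‖x‖ ^ Mb := by
    intro i j x hx
    have hx1 : (1:ℝ) ≤ ‖x‖ := by linarith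
    refine (hKM i j x hx).trans (mul_le_mul (hKb i j)
      (Real.rpow_le_rpow_of_exponent_le hx1 (hMb i j))
      (Real.rpow_nonneg (by linarith) _) (by linarith))
  set Kn : ℝ := n * Kb with hKn_def
  have hKn1 : 1 ≤ Kn := by
    have : (1:ℝ) ≤ (n:ℝ) := by exact_mod_cast hn
    calc (1:ℝ) = 1 * 1 := by ring
    _ ≤ n * Kb := mul_le_mul this hKb1 zero_le_one (by linarith)
  have hKn0 : 0 < Kn := by linarith
  -- the functional-equation step bound
  have hstep : ∀ ξ : ℂ, r₀ < ‖ξ‖ → ‖g (ξ ^ p)‖ ≤ Kn * ‖ξ‖ ^ Mb * ‖g ξ‖ := by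
    intro ξ hξ
    rw [heq ξ hξ]
    have hnn : 0 ≤ Kn * ‖ξ‖ ^ Mb * ‖g ξ‖ := by positivity
    rw [pi_norm_le_iff_of_nonneg hnn]
    intro i
    have : ((A.map (fun a => a.eval (RingHom.id ℂ) ξ)).mulVec (g ξ)) i
        = ∑ j : Fin n, (A i j).eval (RingHom.id ℂ) ξ * g ξ j := by
      simp [Matrix.mulVec, dotProduct, Matrix.map_apply]
    rw [this]
    calc ‖∑ j : Fin n, (A i j).eval (RingHom.id ℂ) ξ * g ξ j‖
        ≤ ∑ j : Fin n, ‖(A i j).eval (RingHom.id ℂ) ξ * g ξ j‖ := norm_sum_le _ _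
      _ ≤ ∑ j : Fin n, (Kb * ‖ξ‖ ^ Mb) * ‖g ξ‖ := by
          refine Finset.sum_le_sum fun j _ => ?_
          rw [norm_mul]
          exact mul_le_mul (hentryb i j ξ (le_of_lt hξ)) (norm_le_pi_norm (g ξ) j)
            (norm_nonneg _) (by positivity)
      _ = Kn * ‖ξ‖ ^ Mb * ‖g ξ‖ := by
          rw [Finset.sum_const, Finset.card_univ, Fintype.card_fin, nsmul_eq_mul, hKn_def]
          ring
  -- bound on the base annulus
  set S : Set ℂ := Metric.closedBall 0 (r₀ ^ p) ∩ {x : ℂ | r₀ ≤ ‖x‖} with hS_def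
  have hScpt : IsCompact S :=
    (isCompact_closedBall 0 _).inter_right (isClosed_le continuous_const continuous_norm)
  have hgS : ContinuousOn g S := by
    refine (hg.continuousOn).mono fun x hx => ?_
    have : r₀ ≤ ‖x‖ := hx.2
    simp only [Set.mem_setOf_eq]; linarith
  obtain ⟨C₁, hC₁⟩ := hScpt.exists_bound_of_continuousOn hgS
  set C₀ : ℝ := max C₁ 1 with hC₀_def
  have hC₀1 : 1 ≤ C₀ := le_max_right _ _
  have hC₀0 : 0 < C₀ := by linarith
  set M' : ℝ := Mb / ((p : ℝ) - 1) with hM'_def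
  have hM'0 : 0 < M' := by
    apply div_pos (by linarith) (by linarith)
  -- main induction
  have key : ∀ j : ℕ, ∀ x : ℂ, r₀ < ‖x‖ → ‖x‖ ≤ r₀ ^ p ^ (j + 1) →
      ‖g x‖ ≤ C₀ * Kn ^ j * ‖x‖ ^ M' := by
    intro j
    induction j with
    | zero =>
      intro x hx1 hx2
      have hxS : x ∈ S := ⟨by
        simp only [Metric.mem_closedBall, dist_zero_right]
        simpa using hx2, le_of_lt hx1⟩
      have h1 : ‖g x‖ ≤ C₁ := hC₁ x hxS
      have h2 : (1:ℝ) ≤ ‖x‖ ^ M' :=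
        Real.one_le_rpow (by linarith) (le_of_lt hM'0)
      calc ‖g x‖ ≤ C₁ := h1
        _ ≤ C₀ := le_max_left _ _
        _ = C₀ * 1 * 1 := by ring
        _ ≤ C₀ * Kn ^ 0 * ‖x‖ ^ M' := by
            rw [pow_zero]
            nlinarith
    | succ j ih =>
      intro x hx1 hx2
      by_cases hcase : ‖x‖ ≤ r₀ ^ p ^ (j + 1)
      · refine (ih x hx1 hcase).trans ?_
        have : Kn ^ j ≤ Kn ^ (j + 1) := pow_le_pow_right₀ hKn1 (by omega)
        have hxM : 0 ≤ ‖x‖ ^ M' := Real.rpow_nonneg (norm_nonneg x) _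
        nlinarith [mul_le_mul_of_nonneg_left this (le_of_lt hC₀0)]
      · push_neg at hcase
        have hx0 : x ≠ 0 := by
          intro h; rw [h, norm_zero] at hx1; linarith
        set ξ : ℂ := x ^ ((p : ℂ)⁻¹) with hξ_def
        have hξp : ξ ^ p = x := Complex.cpow_nat_inv_pow x (by omega)
        have hnξp : ‖ξ‖ ^ p = ‖x‖ := by rw [← norm_pow, hξp]
        have hnorm : ‖ξ‖ = ‖x‖ ^ ((p : ℝ)⁻¹) := by
          rw [← hnξp, Real.pow_rpow_inv_natCast (norm_nonneg ξ) (by omega)]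
        -- r₀ < ‖ξ‖
        have hpow1 : r₀ ^ p ≤ r₀ ^ p ^ (j + 1) :=
          pow_le_pow_right₀ (le_of_lt hr₀) (Nat.le_self_pow (by omega) p)
        have hξr : r₀ < ‖ξ‖ := by
          have : r₀ ^ p < ‖ξ‖ ^ p := by rw [hnξp]; linarith
          exact lt_of_pow_lt_pow_left₀ p (norm_nonneg ξ) this
        have hξup : ‖ξ‖ ≤ r₀ ^ p ^ (j + 1) := by
          have h1 : ‖ξ‖ ^ p ≤ (r₀ ^ p ^ (j + 1)) ^ p := by
            rw [hnξp, ← pow_mul, ← pow_succ]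
            exact hx2
          exact le_of_pow_le_pow_left₀ (by omega) (by positivity) h1
        have hgξ := ih ξ hξr hξup
        have hξM : ‖ξ‖ ^ Mb = ‖x‖ ^ ((p:ℝ)⁻¹ * Mb) := by
          rw [hnorm, ← Real.rpow_mul (norm_nonneg x)]
        have hξM' : ‖ξ‖ ^ M' = ‖x‖ ^ ((p:ℝ)⁻¹ * M') := by
          rw [hnorm, ← Real.rpow_mul (norm_nonneg x)]
        have harith : (p:ℝ)⁻¹ * Mb + (p:ℝ)⁻¹ * M' = M' := by
          have hpm1 : ((p:ℝ) - 1) ≠ 0 := by linarith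
          rw [hM'_def]
          field_simp
          ring
        calc ‖g x‖ = ‖g (ξ ^ p)‖ := by rw [hξp]
          _ ≤ Kn * ‖ξ‖ ^ Mb * ‖g ξ‖ := hstep ξ hξr
          _ ≤ Kn * ‖ξ‖ ^ Mb * (C₀ * Kn ^ j * ‖ξ‖ ^ M') := by
              exact mul_le_mul_of_nonneg_left hgξ (mul_nonneg (by linarith) (Real.rpow_nonneg (norm_nonneg _) _))
          _ = C₀ * Kn ^ (j + 1) * (‖ξ‖ ^ Mb * ‖ξ‖ ^ M') := by ring
          _ = C₀ * Kn ^ (j + 1) * ‖x‖ ^ M' := by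
              rw [hξM, hξM', ← Real.rpow_add (lt_trans hr0' hx1), harith]
  -- conclusion
  set lr : ℝ := Real.log r₀ with hlr_def
  have hlr0 : 0 < lr := Real.log_pos hr₀
  set d : ℝ := max (Real.log Kn / Real.log p) 1 with hd_def
  have hd0 : 0 < d := lt_of_lt_of_le one_pos (le_max_right _ _)
  set L : ℝ := C₀ / lr ^ d with hL_def
  have hlrd : 0 < lr ^ d := Real.rpow_pos_of_pos hlr0 _
  have hL0 : 0 < L := div_pos hC₀0 hlrd
  refine ⟨L, d, M', hL0, hd0, hM'0, fun x hx i => ?_⟩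
  have hlx : 0 < Real.log ‖x‖ := Real.log_pos (by linarith)
  -- find j
  have hex : ∃ j : ℕ, ‖x‖ ≤ r₀ ^ p ^ (j + 1) := by
    obtain ⟨m, hm⟩ := pow_unbounded_of_one_lt ‖x‖ hr₀
    exact ⟨m, le_of_lt (lt_of_lt_of_le hm (pow_le_pow_right₀ (le_of_lt hr₀)
      (le_trans (le_of_lt (show m < p ^ m from Nat.lt_pow_self (by omega))) (Nat.pow_le_pow_right (by omega) (by omega)))))⟩
  set j : ℕ := Nat.find hex with hj_def
  have hj : ‖x‖ ≤ r₀ ^ p ^ (j + 1) := Nat.find_spec hex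
  have hlow : r₀ ^ p ^ j < ‖x‖ := by
    rcases Nat.eq_zero_or_pos j with h0 | h0
    · rw [h0]; simpa using hx
    · have := Nat.find_min hex (m := j - 1) (by omega)
      push_neg at this
      have hj1 : j - 1 + 1 = j := by omega
      rwa [hj1] at this
  have hbound : ‖g x‖ ≤ C₀ * Kn ^ j * ‖x‖ ^ M' := key j x hx hj
  -- log estimates
  have hlogp : 0 < Real.log p := Real.log_pos hp1
  set t : ℝ := Real.log ‖x‖ / lr with ht_def
  have hpj : ((p : ℝ)) ^ j * lr < Real.log ‖x‖ := by
    have h := Real.log_lt_log (by positivity) hlow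
    rw [Real.log_pow] at h
    push_cast at h
    exact h
  have hpjt : ((p:ℝ)) ^ j < t := (lt_div_iff₀ hlr0).2 hpj
  have ht1 : 1 < t := lt_of_le_of_lt (one_le_pow₀ (le_of_lt hp1)) hpjt
  have hjlog : (j : ℝ) * Real.log p < Real.log t := by
    have := Real.log_lt_log (by positivity) hpjt
    rwa [Real.log_pow] at this
  have hKnj : Kn ^ j ≤ t ^ d := by
    have h1 : Kn ^ j = Real.exp ((j : ℝ) * Real.log Kn) := by
      rw [← Real.rpow_natCast Kn j, Real.rpow_def_of_pos hKn0, mul_comm]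
    have h2 : t ^ d = Real.exp (d * Real.log t) := by
      rw [Real.rpow_def_of_pos (by linarith), mul_comm]
    rw [h1, h2, Real.exp_le_exp]
    have hlogKn : 0 ≤ Real.log Kn := Real.log_nonneg hKn1
    have hlogt : 0 < Real.log t := Real.log_pos ht1
    have hc : Real.log Kn / Real.log p ≤ d := le_max_left _ _
    have h3 : (j : ℝ) * Real.log Kn ≤ (Real.log t / Real.log p) * Real.log Kn := by
      refine mul_le_mul_of_nonneg_right ?_ hlogKn
      rw [le_div_iff₀ hlogp]
      linarith
    refine h3.trans ?_
    calc Real.log t / Real.log p * Real.log Kn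
        = (Real.log Kn / Real.log p) * Real.log t := by ring
      _ ≤ d * Real.log t := mul_le_mul_of_nonneg_right hc (le_of_lt hlogt)
  have htd : t ^ d = Real.log ‖x‖ ^ d / lr ^ d := by
    rw [ht_def, Real.div_rpow (le_of_lt hlx) (le_of_lt hlr0)]
  have hfinal : ‖g x‖ ≤ L * Real.log ‖x‖ ^ d * ‖x‖ ^ M' := by
    refine hbound.trans ?_
    have hxM : 0 ≤ ‖x‖ ^ M' := Real.rpow_nonneg (norm_nonneg x) _
    refine mul_le_mul_of_nonneg_right ?_ hxM
    have : C₀ * Kn ^ j ≤ C₀ * t ^ d := mul_le_mul_of_nonneg_left hKnj (le_of_lt hC₀0)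
    refine this.trans (le_of_eq ?_)
    rw [htd, hL_def]
    ring
  exact le_trans (norm_le_pi_norm (g x) i) hfinal
end

section
/- Let h be a meromorphic function on C that is 2πi-periodic on a left half-plane {Re t < −N} where it is holomorphic. Then h is 2πi-periodic on all of C, and there exists a meromorphic function g̃ on C \ {0} with g̃(e^t) = h(t) for all t. -/
open Complex Filter Set Topology

private lemma aux_m_cases (m : ℤ) (x : ℝ) (hx : |x| < 4 * Real.pi)
    (hm : x = 2 * Real.pi * m) : m = -1 ∨ m = 0 ∨ m = 1 := by
  have hπ := Real.pi_pos
  have h2 : 2 * Real.pi * |(m : ℝ)| < 4 * Real.pi := by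
    rwa [hm, abs_mul, abs_of_pos (by positivity)] at hx
  have h3 : |(m : ℝ)| < 2 := by nlinarith
  rw [← Int.cast_abs] at h3
  have h4 : |m| < 2 := by exact_mod_cast h3
  rw [abs_lt] at h4; omega

private lemma countable_nonanalytic {h : ℂ → ℂ} (hm : MeromorphicOn h Set.univ) :
    {t : ℂ | ¬ AnalyticAt ℂ h t}.Countable := by
  set E := {t : ℂ | ¬ AnalyticAt ℂ h t} with hE
  have hd : ∀ x : ℂ, Disjoint (𝓝[≠] x) (𝓟 E) := by
    intro x
    rw [disjoint_principal_right]
    exact (hm x (mem_univ x)).eventually_analyticAt.mono (fun y hy => by simpa [hE] using hy)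
  obtain ⟨-, hdisc⟩ := isClosed_and_discrete_iff.mpr hd
  haveI := hdisc.to_subtype
  rw [← Set.countable_coe_iff]
  exact (TopologicalSpace.separableSpace_iff_countable).mp inferInstance

private lemma meroComp {h φ : ℂ → ℂ} {z₀ : ℂ} (hm : MeromorphicAt h (φ z₀))
    (hφ : AnalyticAt ℂ φ z₀) (hne : ∀ᶠ z in 𝓝[≠] z₀, φ z ≠ φ z₀) :
    MeromorphicAt (fun z => h (φ z)) z₀ := by
  obtain ⟨n, hn⟩ := hm
  have hA : AnalyticAt ℂ (fun z => (φ z - φ z₀) ^ n • h (φ z)) z₀ := by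
    have := hn.comp hφ
    simpa [Function.comp_def] using this
  have hg : MeromorphicAt
      (fun z => ((φ z - φ z₀) ^ n)⁻¹ * ((φ z - φ z₀) ^ n • h (φ z))) z₀ :=
    (((hφ.sub analyticAt_const).pow n).meromorphicAt.inv).mul hA.meromorphicAt
  refine hg.congr (hne.mono fun z hz => ?_)
  have hne' : (φ z - φ z₀) ^ n ≠ 0 := pow_ne_zero _ (sub_ne_zero.mpr hz)
  simp [smul_eq_mul, ← mul_assoc, inv_mul_cancel₀ hne']

private lemma per_all {h : ℂ → ℂ} {N : ℝ}
    (hmero : MeromorphicOn h Set.univ)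
    (hhol : ∀ t : ℂ, t.re < -N → AnalyticAt ℂ h t)
    (hper : ∀ t : ℂ, t.re < -N → h (t + 2 * Real.pi * Complex.I) = h t) (k : ℤ)
    (t : ℂ) (h1 : AnalyticAt ℂ h t)
    (h2 : AnalyticAt ℂ h (t + 2 * Real.pi * Complex.I * k)) :
    h (t + 2 * Real.pi * Complex.I * k) = h t := by
  set p : ℂ := 2 * Real.pi * Complex.I with hp
  have hre : ∀ (w : ℂ) (m : ℤ), (w + p * m).re = w.re := by
    intro w m
    simp [hp, Complex.add_re, Complex.mul_re, Complex.mul_im]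
  -- periodicity on the half-plane for all integers
  have hHP : ∀ (m : ℤ) (w : ℂ), w.re < -N → h (w + p * m) = h w := by
    intro m
    induction m using Int.induction_on with
    | zero => simp
    | succ n ih =>
      intro w hw
      have e : w + p * ((n : ℤ) + 1 : ℤ) = (w + p * (n : ℤ)) + p := by push_cast; ring
      rw [e]
      have hre2 : (w + p * (n : ℤ)).re = w.re := hre w n
      rw [hper _ (by rw [hre2]; exact hw)]
      exact ih w hw
    | pred n ih =>
      intro w hw
      have h1' := hper (w + p * (-(n : ℤ) - 1 : ℤ)) (by rw [hre]; exact hw)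
      have e : w + p * (-(n : ℤ) - 1 : ℤ) + p = w + p * (-(n : ℤ)) := by push_cast; ring
      rw [e] at h1'
      rw [← h1']
      have := ih w hw
      push_cast at this ⊢
      exact this
  -- identity theorem part
  set d : ℂ → ℂ := fun w => h (w + p * k) - h w with hd
  set E : Set ℂ := {w : ℂ | ¬ AnalyticAt ℂ h w} with hEdef
  have hE : E.Countable := countable_nonanalytic hmero
  set D : Set ℂ := E ∪ (fun w : ℂ => w + p * k) ⁻¹' E with hDdef
  have hD : D.Countable := by
    refine hE.union (hE.preimage ?_)
    exact fun a b hab => by simpa using hab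
  set U : Set ℂ := {w : ℂ | AnalyticAt ℂ d w} with hU
  have hDU : Dᶜ ⊆ U := by
    intro w hw
    simp only [hDdef, Set.compl_union, Set.mem_inter_iff, Set.mem_compl_iff, Set.mem_preimage,
      hEdef, Set.mem_setOf_eq, not_not] at hw
    exact hw.2.comp_of_eq ((analyticAt_id.add analyticAt_const)) rfl |>.sub hw.1
  have hUopen : IsOpen U := isOpen_analyticAt ℂ d
  have hUconn : IsPreconnected U := by
    have hrank : 1 < Module.rank ℝ ℂ := by
      rw [Complex.rank_real_complex]; norm_num
    have hpc : IsPreconnected Dᶜ :=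
      (hD.isPathConnected_compl_of_one_lt_rank hrank).isConnected.isPreconnected
    refine hpc.subset_closure hDU ?_
    rw [(hD.dense_compl ℝ).closure_eq]
    exact Set.subset_univ U
  set t₀ : ℂ := ((-(N + 1) : ℝ) : ℂ) with ht₀
  have ht₀re : t₀.re < -N := by rw [ht₀]; simp only [Complex.ofReal_re]; linarith
  have ht₀U : t₀ ∈ U := by
    refine AnalyticAt.sub ?_ (hhol _ ht₀re)
    exact ((hhol _ (by rw [hre]; exact ht₀re)).comp_of_eq
      (analyticAt_id.add analyticAt_const) rfl)
  have hev : d =ᶠ[𝓝 t₀] 0 := by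
    have hopen : IsOpen {w : ℂ | w.re < -N} := isOpen_lt Complex.continuous_re continuous_const
    filter_upwards [hopen.mem_nhds ht₀re] with w hw
    simp only [hd, Pi.zero_apply, sub_eq_zero]
    exact hHP k w hw
  have heq : Set.EqOn d 0 U := by
    refine AnalyticOnNhd.eqOn_zero_of_preconnected_of_eventuallyEq_zero
      (fun x hx => hx) hUconn ht₀U hev
  have htU : t ∈ U := (h2.comp_of_eq (analyticAt_id.add analyticAt_const) rfl).sub h1
  have := heq htU
  simpa [hd, sub_eq_zero] using this


private lemma evAnAt {h φ : ℂ → ℂ} {z₀ t₁ : ℂ} (hmero : MeromorphicOn h Set.univ)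
    (htend : Tendsto φ (𝓝[≠] z₀) (𝓝[≠] t₁)) (c : ℂ) :
    ∀ᶠ z in 𝓝[≠] z₀, AnalyticAt ℂ h (φ z + c) := by
  have h1 := tendsto_nhdsWithin_iff.mp htend
  have h2 : Tendsto (fun z => φ z + c) (𝓝[≠] z₀) (𝓝[≠] (t₁ + c)) := by
    rw [tendsto_nhdsWithin_iff]
    refine ⟨h1.1.add_const c, h1.2.mono fun z hz => ?_⟩
    simp only [Set.mem_compl_iff, Set.mem_singleton_iff] at hz ⊢
    exact fun hh => hz (by linear_combination hh)
  exact h2.eventually (hmero (t₁ + c) (Set.mem_univ _)).eventually_analyticAt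


/-- Let `h` be meromorphic on `ℂ`, holomorphic and `2πi`-periodic on a left
half-plane `{Re t < −N}`.  Then `h` is `2πi`-periodic on all of `ℂ` (as a meromorphic
function, i.e. wherever both sides are analytic), and there is a meromorphic function `g̃`
on `ℂ \ {0}` with `g̃(e^t) = h(t)` (again away from poles). -/
theorem stmt15 (h : ℂ → ℂ) (N : ℝ)
    (hmero : MeromorphicOn h Set.univ)
    (hhol : ∀ t : ℂ, t.re < -N → AnalyticAt ℂ h t)
    (hper : ∀ t : ℂ, t.re < -N → h (t + 2 * Real.pi * Complex.I) = h t) :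
    (∀ t : ℂ, AnalyticAt ℂ h t → AnalyticAt ℂ h (t + 2 * Real.pi * Complex.I) →
      h (t + 2 * Real.pi * Complex.I) = h t) ∧
    ∃ gt : ℂ → ℂ, MeromorphicOn gt {z : ℂ | z ≠ 0} ∧
      ∀ t : ℂ, AnalyticAt ℂ h t → AnalyticAt ℂ gt (Complex.exp t) →
        gt (Complex.exp t) = h t := by
  have per := per_all hmero hhol hper
  have hπ := Real.pi_pos
  -- generic step : turn `log w' = w + m * (2πI)` plus analyticity into `h (log w') = h w`
  have key : ∀ (m : ℤ) (a w : ℂ), a = w + (m : ℂ) * (2 * Real.pi * Complex.I) →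
      AnalyticAt ℂ h w → AnalyticAt ℂ h a → h a = h w := by
    intro m a w hm hw ha
    have ha' : AnalyticAt ℂ h (w + 2 * Real.pi * Complex.I * (m : ℂ)) := by
      rwa [show w + 2 * Real.pi * Complex.I * (m : ℂ) = a by rw [hm]; ring]
    have := per m w hw ha'
    rwa [show w + 2 * Real.pi * Complex.I * (m : ℂ) = a by rw [hm]; ring] at this
  constructor
  · intro t h1 h2
    have := per 1 t h1 (by simpa using h2)
    simpa using this
  · refine ⟨fun z => h (Complex.log z), ?_, ?_⟩
    · -- meromorphy
      intro z₀ hz₀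
      simp only [Set.mem_setOf_eq] at hz₀
      have hevne : ∀ᶠ z in 𝓝[≠] z₀, z ≠ 0 :=
        eventually_nhdsWithin_of_eventually_nhds (eventually_ne_nhds hz₀)
      have hevz₀ : ∀ᶠ z in 𝓝[≠] z₀, z ≠ z₀ := eventually_mem_nhdsWithin
      by_cases hs : z₀ ∈ Complex.slitPlane
      · have hne : ∀ᶠ z in 𝓝[≠] z₀, Complex.log z ≠ Complex.log z₀ := by
          filter_upwards [hevne, hevz₀] with z hz hzz heq
          exact hzz (by rw [← Complex.exp_log hz, heq, Complex.exp_log hz₀])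
        exact meroComp (hmero _ (Set.mem_univ _)) (analyticAt_clog hs) hne
      · -- negative real axis
        rw [Complex.mem_slitPlane_iff] at hs
        push_neg at hs
        have hre : z₀.re < 0 := by
          rcases lt_or_eq_of_le hs.1 with h' | h'
          · exact h'
          · exact absurd (Complex.ext (by simpa using h') (by simpa using hs.2)) hz₀
        set φ : ℂ → ℂ := fun z => Complex.log (-z) + Real.pi * Complex.I with hφ
        have hslit : -z₀ ∈ Complex.slitPlane := by
          rw [Complex.mem_slitPlane_iff]; left; simpa using hre
        have hφan : AnalyticAt ℂ φ z₀ := by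
          have := ((analyticAt_clog hslit).comp_of_eq (analyticAt_id.neg) rfl)
          exact (by simpa [Function.comp_def, Pi.add_def, hφ] using this.add (analyticAt_const
            (v := (Real.pi : ℂ) * Complex.I)))
        have hexpφ : ∀ z : ℂ, z ≠ 0 → Complex.exp (φ z) = z := by
          intro z hz
          simp only [hφ]
          rw [Complex.exp_add, Complex.exp_log (neg_ne_zero.mpr hz), Complex.exp_pi_mul_I]
          ring
        have hinj : ∀ᶠ z in 𝓝[≠] z₀, φ z ≠ φ z₀ := by
          filter_upwards [hevne, hevz₀] with z hz hzz heq
          exact hzz (by rw [← hexpφ z hz, heq, hexpφ z₀ hz₀])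
        have htend : Tendsto φ (𝓝[≠] z₀) (𝓝[≠] (φ z₀)) := by
          rw [tendsto_nhdsWithin_iff]
          exact ⟨hφan.continuousAt.tendsto.mono_left nhdsWithin_le_nhds, hinj⟩
        have ev0 := evAnAt hmero htend 0
        have evp := evAnAt hmero htend (2 * Real.pi * Complex.I)
        have evm := evAnAt hmero htend (-(2 * Real.pi * Complex.I))
        have hφim : (φ z₀).im = Real.pi := by
          have harg : Complex.arg (-z₀) = 0 :=
            Complex.arg_eq_zero_iff.mpr ⟨by simpa using hre.le, by simpa using hs.2⟩
          simp [hφ, Complex.add_im, Complex.log_im, harg]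
        have evim : ∀ᶠ z in 𝓝[≠] z₀, |(φ z).im| < 2 * Real.pi := by
          have htend2 : Tendsto (fun z => |(φ z).im|) (𝓝[≠] z₀) (𝓝 |(φ z₀).im|) :=
            ((continuous_abs.comp Complex.continuous_im).continuousAt.tendsto).comp
              (htend.mono_right nhdsWithin_le_nhds)
          exact htend2.eventually_lt_const (by rw [hφim, abs_of_pos hπ]; linarith)
        have hcong : (fun z => h (φ z)) =ᶠ[𝓝[≠] z₀] (fun z => h (Complex.log z)) := by
          filter_upwards [hevne, ev0, evp, evm, evim] with z hz e0 ep em him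
          simp only [add_zero] at e0
          obtain ⟨m, hm⟩ := Complex.exp_eq_exp_iff_exists_int.mp
            (show Complex.exp (Complex.log z) = Complex.exp (φ z) by
              rw [Complex.exp_log hz, hexpφ z hz])
          have himm : (((m : ℂ)) * (2 * Real.pi * Complex.I)).im = 2 * Real.pi * (m : ℝ) := by
            simp [Complex.mul_im, Complex.mul_re]
            ring
          have himeq : (Complex.log z).im = (φ z).im + 2 * Real.pi * (m : ℝ) := by
            rw [hm, Complex.add_im, himm]
          have hbound : |(Complex.log z).im - (φ z).im| < 4 * Real.pi := by
            have h1 : |(Complex.log z).im| ≤ Real.pi :=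
              abs_le.mpr ⟨(Complex.neg_pi_lt_log_im z).le, Complex.log_im_le_pi z⟩
            calc |(Complex.log z).im - (φ z).im| ≤ |(Complex.log z).im| + |(φ z).im| :=
                  abs_sub _ _
              _ < 4 * Real.pi := by linarith
          have hmx : (Complex.log z).im - (φ z).im = 2 * Real.pi * (m : ℝ) := by
            rw [himeq]; ring
          rcases aux_m_cases m _ hbound hmx with rfl | rfl | rfl
          · exact (key (-1) (Complex.log z) (φ z) hm e0
              (by rw [hm, show (((-1):ℤ):ℂ) * (2 * Real.pi * Complex.I) = -(2 * Real.pi * Complex.I) by push_cast; ring]; exact em)).symm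
          · exact (key 0 (Complex.log z) (φ z) hm e0
              (by rw [hm, show ((0:ℤ):ℂ) * (2 * Real.pi * Complex.I) = 0 by push_cast; ring, add_zero]; exact e0)).symm
          · exact (key 1 (Complex.log z) (φ z) hm e0
              (by rw [hm, show ((1:ℤ):ℂ) * (2 * Real.pi * Complex.I) = 2 * Real.pi * Complex.I by push_cast; ring]; exact ep)).symm
        exact (meroComp (hmero (φ z₀) (Set.mem_univ _)) hφan hinj).congr hcong
    · -- values
      intro t h1 hgt
      show h (Complex.log (Complex.exp t)) = h t
      set s : ℂ := Complex.log (Complex.exp t) with hsdef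
      have hexps : Complex.exp s = Complex.exp t := Complex.exp_log (Complex.exp_ne_zero t)
      obtain ⟨k, hk⟩ := Complex.exp_eq_exp_iff_exists_int.mp hexps
      have h₂an : AnalyticAt ℂ (fun w => h (Complex.log (Complex.exp w))) s := by
        have hgs : AnalyticAt ℂ (fun z => h (Complex.log z)) (Complex.exp s) := by
          rwa [hexps]
        have := hgs.comp_of_eq (analyticAt_cexp (z := s)) rfl
        simpa [Function.comp_def] using this
      have hsim : -Real.pi < s.im ∧ s.im ≤ Real.pi := by
        rw [hsdef]
        exact ⟨Complex.neg_pi_lt_log_im _, Complex.log_im_le_pi _⟩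
      have h₂s : Complex.log (Complex.exp s) = s := Complex.log_exp hsim.1 hsim.2
      -- eventual equality on punctured neighbourhood
      have htendid : Tendsto (fun w : ℂ => w) (𝓝[≠] s) (𝓝[≠] s) := tendsto_id
      have ev0 := evAnAt hmero htendid 0
      have evp := evAnAt hmero htendid (2 * Real.pi * Complex.I)
      have evm := evAnAt hmero htendid (-(2 * Real.pi * Complex.I))
      have evim : ∀ᶠ w in 𝓝[≠] s, |w.im| < 2 * Real.pi := by
        have htend2 : Tendsto (fun w : ℂ => |w.im|) (𝓝[≠] s) (𝓝 |s.im|) :=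
          ((continuous_abs.comp Complex.continuous_im).continuousAt.tendsto).comp
            (htendid.mono_right nhdsWithin_le_nhds)
        refine htend2.eventually_lt_const ?_
        have : |s.im| ≤ Real.pi := abs_le.mpr ⟨hsim.1.le, hsim.2⟩
        linarith
      have hcong : ∀ᶠ w in 𝓝[≠] s, h w = h (Complex.log (Complex.exp w)) := by
        filter_upwards [ev0, evp, evm, evim] with w e0 ep em him
        simp only [add_zero] at e0
        obtain ⟨m, hm⟩ := Complex.exp_eq_exp_iff_exists_int.mp
          (Complex.exp_log (Complex.exp_ne_zero w))
        have himm : (((m : ℂ)) * (2 * Real.pi * Complex.I)).im = 2 * Real.pi * (m : ℝ) := by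
          simp [Complex.mul_im, Complex.mul_re]
          ring
        have himeq : (Complex.log (Complex.exp w)).im = w.im + 2 * Real.pi * (m : ℝ) := by
          rw [hm, Complex.add_im, himm]
        have hbound : |(Complex.log (Complex.exp w)).im - w.im| < 4 * Real.pi := by
          have hb1 : |(Complex.log (Complex.exp w)).im| ≤ Real.pi :=
            abs_le.mpr ⟨(Complex.neg_pi_lt_log_im _).le, Complex.log_im_le_pi _⟩
          calc |(Complex.log (Complex.exp w)).im - w.im|
              ≤ |(Complex.log (Complex.exp w)).im| + |w.im| := abs_sub _ _
            _ < 4 * Real.pi := by linarith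
        have hmx : (Complex.log (Complex.exp w)).im - w.im = 2 * Real.pi * (m : ℝ) := by
          rw [himeq]; ring
        rcases aux_m_cases m _ hbound hmx with rfl | rfl | rfl
        · exact (key (-1) _ w hm e0 (by rw [hm, show (((-1):ℤ):ℂ) * (2 * Real.pi * Complex.I) = -(2 * Real.pi * Complex.I) by push_cast; ring]; exact em)).symm
        · exact (key 0 _ w hm e0 (by rw [hm, show ((0:ℤ):ℂ) * (2 * Real.pi * Complex.I) = 0 by push_cast; ring, add_zero]; exact e0)).symm
        · exact (key 1 _ w hm e0 (by rw [hm, show ((1:ℤ):ℂ) * (2 * Real.pi * Complex.I) = 2 * Real.pi * Complex.I by push_cast; ring]; exact ep)).symm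
      have hup : h =ᶠ[𝓝 s] (fun w => h (Complex.log (Complex.exp w))) := by
        have hsup : ∀ᶠ w in 𝓝[≠] s ⊔ pure s, h w = h (Complex.log (Complex.exp w)) :=
          eventually_sup.mpr ⟨hcong, by simpa [eventually_pure] using (by rw [h₂s] : h s =
            h (Complex.log (Complex.exp s)))⟩
        rwa [nhdsNE_sup_pure] at hsup
      have hANs : AnalyticAt ℂ h s := h₂an.congr hup.symm
      have hk' : s = t + 2 * Real.pi * Complex.I * (k : ℂ) := by rw [hk]; ring
      rw [hk']
      exact per k t h1 (hk' ▸ hANs)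
end

section
/- Let p be an integer ≥ 2 and M ⊂ C a 2πi-periodic set with no finite accumulation point, contained in a vertical strip {|Re t| < D}. Then there exists δ > 0 such that the sectors {t ∈ C* : δ < arg(±t) < 2δ} are disjoint from M · p^N = {m p^k : m ∈ M, k ∈ N}. -/
open Complex Set

-- key helper: any z with 0 < arg z < π/4 and |z.re| < D has |z| ≤ 2*D
lemma abs_le_of_arg {z : ℂ} {D : ℝ} (h0 : 0 < Complex.arg z)
    (h1 : Complex.arg z ≤ Real.pi / 4) (hre : |z.re| < D) : ‖z‖ ≤ 2 * D := by
  have hz : z ≠ 0 := by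
    intro h; rw [h, Complex.arg_zero] at h0; exact lt_irrefl _ h0
  have hcos : Real.cos (Complex.arg z) = z.re / ‖z‖ := Complex.cos_arg hz
  have hc : (1:ℝ)/2 ≤ Real.cos (Complex.arg z) := by
    have := Real.cos_le_cos_of_nonneg_of_le_pi (by positivity) (by linarith [Real.pi_gt_three]) h1
    have h4 : Real.cos (Real.pi/4) = Real.sqrt 2 / 2 := Real.cos_pi_div_four
    nlinarith [Real.sq_sqrt (by norm_num : (2:ℝ) ≥ 0), Real.sqrt_nonneg 2]
  have habs : 0 < ‖z‖ := by
    simpa using (norm_pos_iff.mpr hz)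
  have : ‖z‖ / 2 ≤ z.re := by
    rw [hcos, le_div_iff₀ habs] at hc; linarith [hc]
  have := abs_lt.mp hre
  linarith

/-- Let `p ≥ 2` and `M ⊂ ℂ` be a `2πi`-periodic set with no finite
accumulation point, contained in a vertical strip `{|Re t| < D}`.  Then there is `δ > 0`
such that the sectors `{t ∈ ℂ* : δ < arg(±t) < 2δ}` are disjoint from
`M · p^ℕ = {m p^k : m ∈ M, k ∈ ℕ}`. -/
theorem stmt16 (p : ℕ) (hp : 2 ≤ p) (M : Set ℂ) (D : ℝ)
    (hper : ∀ z ∈ M, z + 2 * Real.pi * Complex.I ∈ M ∧ z - 2 * Real.pi * Complex.I ∈ M)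
    (hacc : ∀ z : ℂ, ¬ AccPt z (Filter.principal M))
    (hstrip : ∀ z ∈ M, |z.re| < D) :
    ∃ δ : ℝ, 0 < δ ∧ ∀ m ∈ M, ∀ k : ℕ,
      (¬ (δ < Complex.arg (m * (p : ℂ) ^ k) ∧ Complex.arg (m * (p : ℂ) ^ k) < 2 * δ)) ∧
      (¬ (δ < Complex.arg (-(m * (p : ℂ) ^ k)) ∧
            Complex.arg (-(m * (p : ℂ) ^ k)) < 2 * δ)) := by
  -- M is closed and discrete
  have hcd : IsClosed M ∧ DiscreteTopology M := by
    rw [← isDiscrete_iff_discreteTopology, isClosed_and_discrete_iff]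
    intro x
    have := hacc x
    rw [AccPt, Filter.neBot_iff, not_not] at this
    exact disjoint_iff.mpr this
  obtain ⟨hMc, hMd⟩ := hcd
  set S : Set ℂ := Metric.closedBall (0:ℂ) (2*D) ∩ M with hS
  have hfin : S.Finite := Metric.finite_isBounded_inter_isClosed (isDiscrete_iff_discreteTopology.mpr hMd)
    Metric.isBounded_closedBall hMc
  set A : Set ℝ := ((fun z => Complex.arg z) '' S ∪ (fun z => Complex.arg (-z)) '' S) ∩
    Set.Ioi (0:ℝ) with hA
  have hAfin : A.Finite := (((hfin.image _).union (hfin.image _)).inter_of_left _)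
  set F : Finset ℝ := insert (Real.pi/4) hAfin.toFinset with hF
  have hFne : F.Nonempty := ⟨_, Finset.mem_insert_self _ _⟩
  set δ : ℝ := F.min' hFne / 2 with hδ
  have hFpos : ∀ x ∈ F, 0 < x := by
    intro x hx
    rcases Finset.mem_insert.mp hx with h | h
    · subst h; positivity
    · exact (hAfin.mem_toFinset.mp h).2
  have hδpos : 0 < δ := by
    have := hFpos _ (F.min'_mem hFne)
    simpa [hδ] using half_pos this
  have h2δ : 2 * δ ≤ Real.pi / 4 := by
    have := F.min'_le (Real.pi/4) (Finset.mem_insert_self _ _)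
    rw [hδ]; linarith
  have hmin : ∀ θ ∈ A, 2 * δ ≤ θ := by
    intro θ hθ
    have := F.min'_le θ (Finset.mem_insert.mpr (Or.inr (hAfin.mem_toFinset.mpr hθ)))
    rw [hδ]; linarith
  refine ⟨δ, hδpos, fun m hm k => ?_⟩
  have hpk : (0:ℝ) < (p:ℝ)^k := by positivity
  by_cases hm0 : m = 0
  · subst hm0
    simp only [zero_mul, neg_zero, Complex.arg_zero]
    exact ⟨fun h => absurd h.1 (by linarith), fun h => absurd h.1 (by linarith)⟩
  have hcast : m * (p:ℂ)^k = (((p:ℝ)^k : ℝ) : ℂ) * m := by push_cast; ring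
  have harg1 : Complex.arg (m * (p:ℂ)^k) = Complex.arg m := by
    rw [hcast, Complex.arg_real_mul m hpk]
  have hcast2 : -(m * (p:ℂ)^k) = (((p:ℝ)^k : ℝ) : ℂ) * (-m) := by push_cast; ring
  have harg2 : Complex.arg (-(m * (p:ℂ)^k)) = Complex.arg (-m) := by
    rw [hcast2, Complex.arg_real_mul (-m) hpk]
  constructor
  · rw [harg1]
    rintro ⟨h1, h2⟩
    have habs : ‖m‖ ≤ 2*D :=
      abs_le_of_arg (lt_trans hδpos h1) (by linarith) (hstrip m hm)
    have hmS : m ∈ S := ⟨by simpa [Metric.mem_closedBall] using habs, hm⟩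
    have : Complex.arg m ∈ A :=
      ⟨Or.inl ⟨m, hmS, rfl⟩, lt_trans hδpos h1⟩
    exact absurd h2 (not_lt.mpr (hmin _ this))
  · rw [harg2]
    rintro ⟨h1, h2⟩
    have habs : ‖-m‖ ≤ 2*D := by
      refine abs_le_of_arg (lt_trans hδpos h1) (by linarith) ?_
      simpa using hstrip m hm
    have hmS : m ∈ S := ⟨by simpa [Metric.mem_closedBall] using habs, hm⟩
    have : Complex.arg (-m) ∈ A :=
      ⟨Or.inr ⟨m, hmS, rfl⟩, lt_trans hδpos h1⟩
    exact absurd h2 (not_lt.mpr (hmin _ this))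
end
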